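/- arXiv:math/0612807 — 5 statements merged into one kernel-verified Lean document; each statement's English description precedes it below -/
import Mathlib

section
/- For every s ∈ ℂ with Re(s) > 0, one has ∫₀^∞ e^{−sx} · sinh(x) / (cosh(x) + 1/2) dx = (2/√3) · Σ_{k=1}^{∞} sin(2πk/3) · ( 1/(s − 1 + k) − 1/(s + 1 + k) ); in particular the integral converges and the series on the right converges. -/
open MeasureTheory Set Filter Topology Real

section helpers

lemma myIntegrableOn_cexp {c : ℂ} (hc : 0 < c.re) :
    IntegrableOn (fun x : ℝ => Complex.exp (-c * x)) (Ioi 0) := by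
  refine (exp_neg_integrableOn_Ioi 0 hc).mono' ?_ ?_
  · exact (Complex.continuous_exp.comp (by continuity)).aestronglyMeasurable
  · filter_upwards with x
    simp [Complex.norm_exp, Real.norm_eq_abs,
      abs_of_nonneg (Real.exp_pos _).le, neg_mul]

lemma myIntegral_cexp {c : ℂ} (hc : 0 < c.re) :
    ∫ x in Ioi (0:ℝ), Complex.exp (-c * x) = 1 / c := by
  have hc0 : c ≠ 0 := fun h => by simp [h] at hc
  have key := integral_Ioi_of_hasDerivAt_of_tendsto
    (f := fun x : ℝ => -Complex.exp (-c * x) / c)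
    (f' := fun x : ℝ => Complex.exp (-c * x)) (a := 0) (m := 0)
    ?_ ?_ ((myIntegrableOn_cexp hc)) ?_
  · rw [key]; simp [neg_div, hc0]
  · apply Continuous.continuousWithinAt; fun_prop
  · intro x hx
    have h1 : HasDerivAt (fun x : ℝ => -c * (x:ℂ)) (-c) x := by
      simpa using ((hasDerivAt_id (x:ℂ)).const_mul (-c)).comp_ofReal
    have := (h1.cexp).neg.div_const c
    convert this using 1
    · rfl
    · simp [hc0]
    · rw [mul_neg, neg_neg, mul_div_assoc, div_self hc0, mul_one]
  · rw [show (0:ℂ) = 0/c by simp]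
    apply Tendsto.div_const
    rw [show (0:ℂ) = -0 by simp]
    apply Tendsto.neg
    rw [tendsto_zero_iff_norm_tendsto_zero]
    have h2 : ∀ x : ℝ, ‖Complex.exp (-c * x)‖ = Real.exp (-(c.re * x)) := by
      intro x; simp [Complex.norm_exp, neg_mul]
    simp_rw [h2]
    exact (Real.tendsto_exp_neg_atTop_nhds_zero.comp (tendsto_id.const_mul_atTop hc)).congr
      (by intro x; simp [Function.comp])

lemma myIntegral_rexp {b : ℝ} (hb : 0 < b) :
    ∫ x in Ioi (0:ℝ), Real.exp (-b * x) = 1 / b := by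
  have hb0 : b ≠ 0 := ne_of_gt hb
  have key := integral_Ioi_of_hasDerivAt_of_tendsto
    (f := fun x : ℝ => -Real.exp (-b * x) / b)
    (f' := fun x : ℝ => Real.exp (-b * x)) (a := 0) (m := 0)
    ?_ ?_ ((exp_neg_integrableOn_Ioi 0 hb).congr_fun (fun x _ => by simp [neg_mul]) measurableSet_Ioi) ?_
  · rw [key]; simp [neg_div, hb0]
  · apply Continuous.continuousWithinAt; fun_prop
  · intro x hx
    have h1 : HasDerivAt (fun x : ℝ => -b * x) (-b) x := by
      simpa using (hasDerivAt_id x).const_mul (-b)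
    have := (h1.exp).neg.div_const b
    convert this using 1
    · rfl
    · simp [hb0]
    · rw [mul_neg, neg_neg, mul_div_assoc, div_self hb0, mul_one]
  · rw [show (0:ℝ) = -0/b by simp]
    apply Tendsto.div_const
    apply Tendsto.neg
    exact (Real.tendsto_exp_neg_atTop_nhds_zero.comp (tendsto_id.const_mul_atTop hb)).congr
      (by intro x; simp [Function.comp])

lemma myIntegrableOn_rexp {b : ℝ} (hb : 0 < b) :
    IntegrableOn (fun x : ℝ => Real.exp (-b * x)) (Ioi 0) :=
  (exp_neg_integrableOn_Ioi 0 hb).congr_fun (fun x _ => by simp [neg_mul]) measurableSet_Ioi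

lemma mySinSum {e : ℝ} (he0 : 0 ≤ e) (he1 : e < 1) :
    HasSum (fun k : ℕ => Real.sin (2 * π * ((k:ℝ) + 1) / 3) * e ^ k)
      ((Real.sqrt 3 / 2) / (1 + e + e ^ 2)) := by
  set ω : ℂ := Complex.exp ((2 * π / 3 : ℝ) * Complex.I) with hω
  have hωre : ω.re = -(1/2) := by
    rw [hω, Complex.exp_ofReal_mul_I_re,
      show 2 * π / 3 = π - π/3 by ring, Real.cos_pi_sub, Real.cos_pi_div_three]
  have hωim : ω.im = Real.sqrt 3 / 2 := by
    rw [hω, Complex.exp_ofReal_mul_I_im,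
      show 2 * π / 3 = π - π/3 by ring, Real.sin_pi_sub, Real.sin_pi_div_three]
  have hnorm : ‖ω * e‖ < 1 := by
    rw [norm_mul, hω]
    simp only [Complex.norm_exp]
    simp [abs_of_nonneg he0, he1]
  have hgeo := (hasSum_geometric_of_norm_lt_one hnorm).mul_left ω
  have him := Complex.hasSum_im hgeo
  have hfun : ∀ k : ℕ, (ω * (ω * (e:ℝ)) ^ k).im = Real.sin (2 * π * ((k:ℝ) + 1) / 3) * e ^ k := by
    intro k
    have h : ω * (ω * (e:ℂ)) ^ k = ω ^ (k + 1) * ((e ^ k : ℝ) : ℂ) := by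
      push_cast; ring
    rw [h, Complex.im_mul_ofReal]
    congr 1
    rw [hω, ← Complex.exp_nat_mul, show (↑(k + 1) : ℂ) * (↑(2 * π / 3 : ℝ) * Complex.I)
        = ((((k:ℝ) + 1) * (2 * π / 3) : ℝ) : ℂ) * Complex.I by push_cast; ring,
      Complex.exp_ofReal_mul_I_im]
    congr 1
    ring
  have hval : (ω * (1 - ω * (e:ℂ))⁻¹).im = (Real.sqrt 3 / 2) / (1 + e + e ^ 2) := by
    rw [mul_comm, ← div_eq_inv_mul, Complex.div_im]
    have h1 : (1 - ω * (e:ℂ)).re = 1 + e / 2 := by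
      rw [Complex.sub_re, Complex.one_re, Complex.mul_re, hωre, Complex.ofReal_re,
        Complex.ofReal_im]
      ring
    have h2 : (1 - ω * (e:ℂ)).im = -(Real.sqrt 3 / 2 * e) := by
      rw [Complex.sub_im, Complex.one_im, Complex.mul_im, hωre, hωim, Complex.ofReal_re,
        Complex.ofReal_im]
      ring
    have hsq : Real.sqrt 3 ^ 2 = 3 := Real.sq_sqrt (by norm_num)
    have h3 : Complex.normSq (1 - ω * (e:ℂ)) = 1 + e + e ^ 2 := by
      rw [Complex.normSq_apply, h1, h2]
      nlinarith [hsq]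
    have hden : (1:ℝ) + e + e ^ 2 > 0 := by nlinarith
    rw [h1, h2, h3, hωre, hωim]
    field_simp
    ring
  rw [hval] at him
  exact (funext hfun : _ = _) ▸ him

lemma myRealIdent (x : ℝ) :
    (2 / Real.sqrt 3) * ((1 - Real.exp (-x) ^ 2) *
      ((Real.sqrt 3 / 2) / (1 + Real.exp (-x) + Real.exp (-x) ^ 2)))
    = Real.sinh x / (Real.cosh x + 1/2) := by
  have hs3 : (0:ℝ) < Real.sqrt 3 := by positivity
  have hu : (0:ℝ) < Real.exp x := Real.exp_pos x
  have hcancel : 2 / Real.sqrt 3 * (Real.sqrt 3 / 2) = 1 := by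
    field_simp
  have he : (0:ℝ) < Real.exp (-x) := Real.exp_pos _
  have hden1 : (0:ℝ) < 1 + Real.exp (-x) + Real.exp (-x) ^ 2 := by positivity
  have hden2 : (0:ℝ) < Real.cosh x + 1/2 := by positivity
  calc 2 / Real.sqrt 3 * ((1 - Real.exp (-x) ^ 2) *
        ((Real.sqrt 3 / 2) / (1 + Real.exp (-x) + Real.exp (-x) ^ 2)))
      = (2 / Real.sqrt 3 * (Real.sqrt 3 / 2)) *
        ((1 - Real.exp (-x) ^ 2) / (1 + Real.exp (-x) + Real.exp (-x) ^ 2)) := by ring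
    _ = (1 - Real.exp (-x) ^ 2) / (1 + Real.exp (-x) + Real.exp (-x) ^ 2) := by
        rw [hcancel]; ring
    _ = Real.sinh x / (Real.cosh x + 1/2) := by
        rw [Real.sinh_eq, Real.cosh_eq, Real.exp_neg] at *
        field_simp
        ring

end helpers


/-- for `Re s > 0`,
`∫₀^∞ e^{-sx} sinh x/(cosh x + 1/2) dx
  = (2/√3) ∑_{k≥1} sin(2πk/3)(1/(s-1+k) - 1/(s+1+k))`;
in particular the integral converges and the series converges. -/
theorem integral_eq_series_third_root (s : ℂ) (hs : 0 < s.re) :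
    MeasureTheory.IntegrableOn
      (fun x : ℝ => Complex.exp (-s * (x : ℂ)) * (Real.sinh x : ℂ) /
        ((Real.cosh x + 1 / 2 : ℝ) : ℂ)) (Set.Ioi 0) ∧
    Summable (fun k : ℕ =>
      ((Real.sin (2 * Real.pi * ((k : ℝ) + 1) / 3) : ℝ) : ℂ) *
        (1 / (s - 1 + ((k : ℂ) + 1)) - 1 / (s + 1 + ((k : ℂ) + 1)))) ∧
    ∫ x in Set.Ioi (0 : ℝ),
        Complex.exp (-s * (x : ℂ)) * (Real.sinh x : ℂ) /
          ((Real.cosh x + 1 / 2 : ℝ) : ℂ)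
      = ((2 / Real.sqrt 3 : ℝ) : ℂ) *
        ∑' k : ℕ, ((Real.sin (2 * Real.pi * ((k : ℝ) + 1) / 3) : ℝ) : ℂ) *
          (1 / (s - 1 + ((k : ℂ) + 1)) - 1 / (s + 1 + ((k : ℂ) + 1))) := by
  set σ := s.re with hσ
  set g : ℕ → ℝ → ℂ := fun k x =>
    ((Real.sin (2 * Real.pi * ((k : ℝ) + 1) / 3) : ℝ) : ℂ) *
      (Complex.exp (-(s + k) * x) - Complex.exp (-(s + k + 2) * x)) with hg
  have hre1 : ∀ k : ℕ, 0 < (s + k).re := by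
    intro k
    have : (s + (k:ℂ)).re = σ + k := by simp [Complex.add_re, Complex.natCast_re, hσ]
    rw [this]; positivity
  have hre2 : ∀ k : ℕ, 0 < (s + k + 2).re := by
    intro k
    have : (s + (k:ℂ) + 2).re = σ + k + 2 := by simp [Complex.add_re, Complex.natCast_re, hσ]
    rw [this]; positivity
  have hgint : ∀ k : ℕ, IntegrableOn (g k) (Set.Ioi 0) := by
    intro k
    exact (((myIntegrableOn_cexp (hre1 k)).sub (myIntegrableOn_cexp (hre2 k))).const_mul _)
  have hgval : ∀ k : ℕ, ∫ x in Set.Ioi (0:ℝ), g k x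
      = ((Real.sin (2 * Real.pi * ((k : ℝ) + 1) / 3) : ℝ) : ℂ) *
        (1 / (s - 1 + ((k : ℂ) + 1)) - 1 / (s + 1 + ((k : ℂ) + 1))) := by
    intro k
    have e1 : s - 1 + ((k : ℂ) + 1) = s + k := by ring
    have e2 : s + 1 + ((k : ℂ) + 1) = s + k + 2 := by ring
    rw [e1, e2, hg]
    simp only
    rw [integral_const_mul, integral_sub (myIntegrableOn_cexp (hre1 k))
      (myIntegrableOn_cexp (hre2 k)), myIntegral_cexp (hre1 k), myIntegral_cexp (hre2 k)]
  have hgnorm : ∀ k : ℕ, ∀ x ∈ Set.Ioi (0:ℝ),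
      ‖g k x‖ ≤ Real.exp (-(σ + k) * x) - Real.exp (-(σ + k + 2) * x) := by
    intro k x hx
    have hx0 : (0:ℝ) < x := hx
    rw [hg]
    simp only [norm_mul, Complex.norm_real, Real.norm_eq_abs]
    have hdiff : Complex.exp (-(s + k) * x) - Complex.exp (-(s + k + 2) * x)
        = Complex.exp (-(s + k) * x) * (1 - Complex.exp (-(2:ℂ) * x)) := by
      rw [mul_sub, mul_one, ← Complex.exp_add]
      ring_nf
    rw [hdiff, norm_mul]
    have h1 : ‖Complex.exp (-(s + k) * x)‖ = Real.exp (-(σ + k) * x) := by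
      rw [Complex.norm_exp]
      congr 1
      have : (-(s + (k:ℂ)) * (x:ℂ)).re = -(s.re + k) * x := by
        simp [Complex.add_re, Complex.natCast_re, Complex.mul_re, Complex.ofReal_re,
          Complex.ofReal_im]
      rw [this]
    have h2 : ‖(1:ℂ) - Complex.exp (-(2:ℂ) * x)‖ = 1 - Real.exp (-(2:ℝ) * x) := by
      have hc : Complex.exp (-(2:ℂ) * x) = ((Real.exp (-(2:ℝ) * x) : ℝ) : ℂ) := by
        rw [Complex.ofReal_exp]; norm_cast
      have hlt : Real.exp (-(2:ℝ) * x) < 1 := by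
        rw [Real.exp_lt_one_iff]; nlinarith
      rw [hc, ← Complex.ofReal_one, ← Complex.ofReal_sub, Complex.norm_real, Real.norm_eq_abs,
        abs_of_nonneg (by linarith)]
    rw [h1, h2]
    have hsin : |Real.sin (2 * Real.pi * ((k : ℝ) + 1) / 3)| ≤ 1 := Real.abs_sin_le_one _
    have hpos : 0 < Real.exp (-(σ + k) * x) := Real.exp_pos _
    have h3 : 0 ≤ 1 - Real.exp (-(2:ℝ) * x) := by
      have : Real.exp (-(2:ℝ) * x) < 1 := by rw [Real.exp_lt_one_iff]; nlinarith
      linarith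
    have hfact : Real.exp (-(σ + k) * x) * (1 - Real.exp (-(2:ℝ) * x))
        = Real.exp (-(σ + k) * x) - Real.exp (-(σ + k + 2) * x) := by
      rw [mul_sub, mul_one, ← Real.exp_add]
      ring_nf
    rw [← hfact]
    exact mul_le_of_le_one_left (mul_nonneg hpos.le h3) hsin
  have hBval : ∀ k : ℕ, ∫ x in Set.Ioi (0:ℝ),
      (Real.exp (-(σ + k) * x) - Real.exp (-(σ + k + 2) * x))
      = 1 / (σ + k) - 1 / (σ + k + 2) := by
    intro k
    have p1 : (0:ℝ) < σ + k := by positivity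
    have p2 : (0:ℝ) < σ + k + 2 := by positivity
    rw [integral_sub (myIntegrableOn_rexp p1) (myIntegrableOn_rexp p2),
      myIntegral_rexp p1, myIntegral_rexp p2]
  set m : ℝ := min σ 1 with hm
  have hm0 : 0 < m := lt_min hs one_pos
  have hm1 : m ≤ 1 := min_le_right _ _
  have hmσ : m ≤ σ := min_le_left _ _
  have hBsum : Summable (fun k : ℕ => 1 / (σ + k) - 1 / (σ + k + 2)) := by
    have hbound : ∀ k : ℕ, 1 / (σ + k) - 1 / (σ + k + 2)
        ≤ (2 / m ^ 2) * (1 / ((k:ℝ) + 1) ^ 2) := by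
      intro k
      have hk0 : (0:ℝ) ≤ k := Nat.cast_nonneg k
      have p1 : (0:ℝ) < σ + k := by positivity
      have p2 : (0:ℝ) < σ + k + 2 := by positivity
      have hA : m * ((k:ℝ) + 1) ≤ σ + k := by nlinarith
      have hC : m * ((k:ℝ) + 1) ≤ σ + k + 2 := by nlinarith
      have hMpos : 0 < m * ((k:ℝ) + 1) := by positivity
      have heq : 1 / (σ + k) - 1 / (σ + k + 2) = 2 / ((σ + k) * (σ + k + 2)) := by
        field_simp
        ring
      rw [heq]
      have h2 : 2 / ((σ + k) * (σ + k + 2)) ≤ 2 / ((m * ((k:ℝ)+1)) * (m * ((k:ℝ)+1))) := by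
        gcongr
      have h3 : 2 / ((m * ((k:ℝ)+1)) * (m * ((k:ℝ)+1)))
          = (2 / m ^ 2) * (1 / ((k:ℝ) + 1) ^ 2) := by
        field_simp
      linarith [h3 ▸ h2]
    have hsum2 : Summable (fun k : ℕ => (2 / m ^ 2) * (1 / ((k:ℝ) + 1) ^ 2)) := by
      apply Summable.mul_left
      have h := (Real.summable_one_div_nat_pow (p := 2)).mpr (by norm_num)
      have h' := (summable_nat_add_iff 1).mpr h
      exact h'.congr (fun n => by push_cast; ring)
    apply Summable.of_nonneg_of_le _ hbound hsum2
    intro k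
    have p1 : (0:ℝ) < σ + k := by positivity
    have p2 : (0:ℝ) < σ + k + 2 := by positivity
    have : 1 / (σ + k + 2) ≤ 1 / (σ + k) := one_div_le_one_div_of_le p1 (by linarith)
    linarith
  have hsum_norm : Summable (fun k : ℕ => ∫ x in Set.Ioi (0:ℝ), ‖g k x‖) := by
    apply Summable.of_nonneg_of_le
      (fun k => integral_nonneg (fun x => norm_nonneg _)) _ hBsum
    intro k
    rw [← hBval k]
    apply setIntegral_mono_on (hgint k).norm _ measurableSet_Ioi (hgnorm k)
    have p1 : (0:ℝ) < σ + k := by positivity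
    have p2 : (0:ℝ) < σ + k + 2 := by positivity
    exact (myIntegrableOn_rexp p1).sub (myIntegrableOn_rexp p2)
  have hHS := MeasureTheory.hasSum_integral_of_summable_integral_norm
    (μ := volume.restrict (Set.Ioi 0)) (F := g) (fun k => hgint k) hsum_norm
  have hptwise : ∀ x ∈ Set.Ioi (0:ℝ), HasSum (fun k => g k x)
      (Complex.exp (-s * x) * (((1 - Real.exp (-x) ^ 2) *
        ((Real.sqrt 3 / 2) / (1 + Real.exp (-x) + Real.exp (-x) ^ 2)) : ℝ) : ℂ)) := by
    intro x hx
    have hx0 : (0:ℝ) < x := hx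
    have he1 : Real.exp (-x) < 1 := by rw [Real.exp_lt_one_iff]; linarith
    have hss := mySinSum (Real.exp_pos (-x)).le he1
    have hssC := Complex.hasSum_ofReal.mpr hss
    have h := hssC.mul_left (Complex.exp (-s * x) * ((1 - Real.exp (-x) ^ 2 : ℝ) : ℂ))
    have hfun : ∀ k : ℕ, Complex.exp (-s * x) * ((1 - Real.exp (-x) ^ 2 : ℝ) : ℂ) *
        ((Real.sin (2 * Real.pi * ((k:ℝ) + 1) / 3) * Real.exp (-x) ^ k : ℝ) : ℂ) = g k x := by
      intro k
      rw [hg]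
      simp only
      have e1 : Complex.exp (-(s + k) * x) = Complex.exp (-s * x) *
          ((Real.exp (-x) ^ k : ℝ) : ℂ) := by
        rw [Complex.ofReal_pow, Complex.ofReal_exp, ← Complex.exp_nat_mul, ← Complex.exp_add]
        congr 1
        push_cast
        ring
      have e2 : Complex.exp (-(s + k + 2) * x) = Complex.exp (-s * x) *
          ((Real.exp (-x) ^ (k + 2) : ℝ) : ℂ) := by
        rw [Complex.ofReal_pow, Complex.ofReal_exp, ← Complex.exp_nat_mul, ← Complex.exp_add]
        congr 1
        push_cast
        ring
      rw [e1, e2]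
      push_cast
      ring
    have hval : Complex.exp (-s * x) * ((1 - Real.exp (-x) ^ 2 : ℝ) : ℂ) *
        (((Real.sqrt 3 / 2) / (1 + Real.exp (-x) + Real.exp (-x) ^ 2) : ℝ) : ℂ)
        = Complex.exp (-s * x) * (((1 - Real.exp (-x) ^ 2) *
          ((Real.sqrt 3 / 2) / (1 + Real.exp (-x) + Real.exp (-x) ^ 2)) : ℝ) : ℂ) := by
      push_cast
      ring
    rw [hval] at h
    exact (funext hfun : _ = _) ▸ h
  have hmain : ∀ x ∈ Set.Ioi (0:ℝ),
      Complex.exp (-s * (x : ℂ)) * (Real.sinh x : ℂ) / ((Real.cosh x + 1 / 2 : ℝ) : ℂ)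
      = ((2 / Real.sqrt 3 : ℝ) : ℂ) * ∑' k : ℕ, g k x := by
    intro x hx
    rw [(hptwise x hx).tsum_eq]
    rw [mul_div_assoc, ← Complex.ofReal_div, ← myRealIdent x]
    push_cast
    ring
  have hint : IntegrableOn
      (fun x : ℝ => Complex.exp (-s * (x : ℂ)) * (Real.sinh x : ℂ) /
        ((Real.cosh x + 1 / 2 : ℝ) : ℂ)) (Set.Ioi 0) := by
    refine (exp_neg_integrableOn_Ioi 0 hs).mono' ?_ ?_
    · apply Continuous.aestronglyMeasurable
      apply Continuous.div
      · fun_prop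
      · fun_prop
      · intro x
        have : (0:ℝ) < Real.cosh x + 1/2 := by positivity
        exact_mod_cast ne_of_gt this
    · filter_upwards with x
      rw [norm_div, norm_mul]
      have h1 : ‖Complex.exp (-s * (x:ℂ))‖ = Real.exp (-(s.re * x)) := by
        simp [Complex.norm_exp, neg_mul]
      have hc : (0:ℝ) < Real.cosh x + 1/2 := by positivity
      have h2 : ‖((Real.cosh x + 1/2 : ℝ) : ℂ)‖ = Real.cosh x + 1/2 := by
        rw [Complex.norm_real, Real.norm_eq_abs, abs_of_pos hc]
      have h3 : ‖((Real.sinh x : ℝ) : ℂ)‖ ≤ Real.cosh x + 1/2 := by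
        rw [Complex.norm_real, Real.norm_eq_abs, Real.abs_sinh]
        have hsc := Real.sinh_lt_cosh (x := |x|)
        rw [Real.cosh_abs] at hsc
        linarith
      rw [h1, h2]
      calc Real.exp (-(s.re * x)) * ‖((Real.sinh x : ℝ) : ℂ)‖ / (Real.cosh x + 1/2)
          ≤ Real.exp (-(s.re * x)) * (Real.cosh x + 1/2) / (Real.cosh x + 1/2) := by
            gcongr
        _ = Real.exp (-(s.re * x)) := by field_simp
        _ = Real.exp (-s.re * x) := by ring_nf
  refine ⟨hint, ?_, ?_⟩
  · exact hHS.summable.congr hgval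
  · have heq1 : ∫ x in Set.Ioi (0:ℝ),
        Complex.exp (-s * (x : ℂ)) * (Real.sinh x : ℂ) / ((Real.cosh x + 1 / 2 : ℝ) : ℂ)
        = ∫ x in Set.Ioi (0:ℝ), ((2 / Real.sqrt 3 : ℝ) : ℂ) * ∑' k : ℕ, g k x :=
      setIntegral_congr_fun measurableSet_Ioi hmain
    rw [heq1, integral_const_mul]
    congr 1
    rw [← hHS.tsum_eq]
    exact tsum_congr hgval
end

section
/- Let Λ = ℤ ⊕ ℤτ ⊂ ℂ be a lattice with Im τ > 0, let ψ be a character of Λ, and let k : [1,∞) → ℂ be continuous with |k(t)| ≤ C t^{−4} for some constant C and all t ≥ 1. Then for every A > 0, the sum Σ_{μ∈Λ, μ≠0} (ψ(μ)/|μ|²) · ∫_{|μ|²/(2A²)}^{∞} k(1+u) du converges absolutely and equals ∫₀^∞ k(1+u) · Z(2A²u, Λ, ψ) du. -/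
open MeasureTheory Set Filter

lemma aux_int {b : ℝ} (hb : 0 ≤ b) :
    MeasureTheory.IntegrableOn (fun u : ℝ => ((1+u)^4)⁻¹) (Set.Ioi b) ∧
    ∫ u in Set.Ioi b, ((1+u)^4)⁻¹ = ((1+b)^3)⁻¹ / 3 := by
  have hderiv : ∀ x ∈ Set.Ici b, HasDerivAt (fun u : ℝ => -(((1+u)^3)⁻¹/3)) (((1+x)^4)⁻¹) x := by
    intro x hx
    have hx0 : (0:ℝ) ≤ x := le_trans hb hx
    have h0 : (1:ℝ) + x ≠ 0 := by positivity
    have h1 : HasDerivAt (fun u : ℝ => 1+u) 1 x := (hasDerivAt_id x).const_add 1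
    have h2 := (h1.pow 3).inv (pow_ne_zero 3 h0)
    have h3 := (h2.div_const 3).neg
    refine h3.congr_deriv ?_
    simp only [Pi.pow_apply]
    field_simp
    ring
  have hpos : ∀ x ∈ Set.Ioi b, (0:ℝ) ≤ ((1+x)^4)⁻¹ := by
    intro x hx
    have hx0 : (0:ℝ) ≤ x := le_trans hb (le_of_lt hx)
    positivity
  have htends : Tendsto (fun u : ℝ => -(((1+u)^3)⁻¹/3)) atTop (nhds 0) := by
    have h1 : Tendsto (fun u : ℝ => (1+u)^3) atTop atTop :=
      (tendsto_pow_atTop (by norm_num)).comp (tendsto_atTop_add_const_left _ 1 tendsto_id)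
    have := (h1.inv_tendsto_atTop).div_const 3
    simpa using this.neg
  refine ⟨integrableOn_Ioi_deriv_of_nonneg' hderiv hpos htends, ?_⟩
  rw [integral_Ioi_of_hasDerivAt_of_nonneg' hderiv hpos htends]
  ring

lemma aux_summable : Summable (fun mn : ℤ × ℤ => ‖(![mn.1, mn.2] : Fin 2 → ℤ)‖ ^ (-8 : ℝ)) := by
  have h := EisensteinSeries.summable_one_div_norm_rpow (k := 8) (by norm_num)
  have h2 := (finTwoArrowEquiv ℤ).symm.summable_iff.mpr h
  simpa [Function.comp_def, finTwoArrowEquiv] using h2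


/-- `Z(x, Λ, ψ) = ∑_{0 ≠ μ ∈ Λ, |μ|² ≤ x} ψ(μ)/|μ|²` for the lattice
`Λ = ℤ ⊕ ℤτ`, where the lattice point indexed by `(m, n) ∈ ℤ × ℤ` is `mτ + n`. -/
noncomputable def latticeZ (τ : ℂ) (ψ : ℤ × ℤ → ℂ) (x : ℝ) : ℂ :=
  ∑' mn : ℤ × ℤ,
    if mn ≠ 0 ∧ ‖(mn.1 : ℂ) * τ + (mn.2 : ℂ)‖ ^ 2 ≤ x then
      ψ mn / ((‖(mn.1 : ℂ) * τ + (mn.2 : ℂ)‖ ^ 2 : ℝ) : ℂ)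
    else 0

/-- Abel-summation identity.  For a unitary character `ψ` of the
lattice `Λ = ℤ ⊕ ℤτ` (`Im τ > 0`) and a continuous `k` on `[1,∞)` with
`|k(t)| ≤ C t^{-4}`, for every `A > 0` the sum
`∑_{0 ≠ μ ∈ Λ} (ψ(μ)/|μ|²) ∫_{|μ|²/(2A²)}^∞ k(1+u) du` converges absolutely
and equals `∫₀^∞ k(1+u) Z(2A²u, Λ, ψ) du`. -/
theorem lattice_sum_eq_integral (τ : ℂ) (hτ : 0 < τ.im) (ψ : ℤ × ℤ → ℂ)
    (hadd : ∀ a b : ℤ × ℤ, ψ (a + b) = ψ a * ψ b)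
    (habs : ∀ a : ℤ × ℤ, ‖ψ a‖ = 1)
    (k : ℝ → ℂ) (C : ℝ) (hk : ContinuousOn k (Set.Ici 1))
    (hbound : ∀ t : ℝ, 1 ≤ t → ‖k t‖ ≤ C / t ^ 4)
    (A : ℝ) (hA : 0 < A) :
    Summable (fun mn : ℤ × ℤ =>
      ‖if mn = 0 then 0 else
        ψ mn / ((‖(mn.1 : ℂ) * τ + (mn.2 : ℂ)‖ ^ 2 : ℝ) : ℂ) *
          ∫ u in Set.Ioi (‖(mn.1 : ℂ) * τ + (mn.2 : ℂ)‖ ^ 2 / (2 * A ^ 2)),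
            k (1 + u)‖) ∧
    (∑' mn : ℤ × ℤ,
      if mn = 0 then 0 else
        ψ mn / ((‖(mn.1 : ℂ) * τ + (mn.2 : ℂ)‖ ^ 2 : ℝ) : ℂ) *
          ∫ u in Set.Ioi (‖(mn.1 : ℂ) * τ + (mn.2 : ℂ)‖ ^ 2 / (2 * A ^ 2)),
            k (1 + u))
      = ∫ u in Set.Ioi (0 : ℝ), k (1 + u) * latticeZ τ ψ (2 * A ^ 2 * u) := by
  set z : UpperHalfPlane := ⟨τ, hτ⟩ with hz
  set δ : ℝ := EisensteinSeries.r z with hδdef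
  have hδ : 0 < δ := EisensteinSeries.r_pos z
  have hA2 : (0:ℝ) < 2 * A ^ 2 := by positivity
  have hC : 0 ≤ C := by
    have := hbound 1 le_rfl
    have h2 := norm_nonneg (k 1)
    simp only [one_pow, div_one] at this
    linarith
  set R : ℤ × ℤ → ℝ := fun mn => ‖(mn.1 : ℂ) * τ + (mn.2 : ℂ)‖ ^ 2 with hR
  set c : ℤ × ℤ → ℂ := fun mn => ψ mn / ((R mn : ℝ) : ℂ) with hc
  set b : ℤ × ℤ → ℝ := fun mn => R mn / (2 * A ^ 2) with hb
  set f : ℤ × ℤ → ℝ → ℂ := fun mn u =>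
    k (1 + u) * (if mn ≠ 0 ∧ R mn ≤ 2 * A ^ 2 * u then c mn else 0) with hf
  -- norm lower bound for nonzero lattice points
  have hvne : ∀ mn : ℤ × ℤ, mn ≠ 0 → (![mn.1, mn.2] : Fin 2 → ℤ) ≠ 0 := by
    intro mn hmn h
    apply hmn
    have h0 := congrFun h 0
    have h1 := congrFun h 1
    simp only [Matrix.cons_val_zero, Matrix.cons_val_one, Matrix.head_cons, Pi.zero_apply] at h0 h1
    exact Prod.ext h0 h1
  have hnorm1 : ∀ mn : ℤ × ℤ, mn ≠ 0 → 1 ≤ ‖(![mn.1, mn.2] : Fin 2 → ℤ)‖ := by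
    intro mn hmn
    rw [EisensteinSeries.norm_eq_max_natAbs]
    simp only [Matrix.cons_val_zero, Matrix.cons_val_one, Matrix.head_cons]
    have hor : mn.1 ≠ 0 ∨ mn.2 ≠ 0 := by
      by_contra h
      push_neg at h
      exact hmn (Prod.ext h.1 h.2)
    have hle : 1 ≤ max mn.1.natAbs mn.2.natAbs := by
      rcases hor with h | h
      · exact le_max_of_le_left (Nat.one_le_iff_ne_zero.mpr (Int.natAbs_ne_zero.mpr h))
      · exact le_max_of_le_right (Nat.one_le_iff_ne_zero.mpr (Int.natAbs_ne_zero.mpr h))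
    exact_mod_cast hle
  have hRlb : ∀ mn : ℤ × ℤ, mn ≠ 0 →
      δ ^ 2 * ‖(![mn.1, mn.2] : Fin 2 → ℤ)‖ ^ 2 ≤ R mn := by
    intro mn hmn
    have h := EisensteinSeries.r_mul_max_le z (hvne mn hmn)
    simp only [Matrix.cons_val_zero, Matrix.cons_val_one, Matrix.head_cons] at h
    have hcoe : (z : ℂ) = τ := rfl
    rw [hcoe] at h
    have h2 := pow_le_pow_left₀ (by positivity) h 2
    rw [mul_pow] at h2
    exact h2
  have hRpos : ∀ mn : ℤ × ℤ, mn ≠ 0 → 0 < R mn := by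
    intro mn hmn
    have h := hRlb mn hmn
    have h1 := hnorm1 mn hmn
    have hδ2 : 0 < δ ^ 2 := by positivity
    have h2 : (1:ℝ) ≤ ‖(![mn.1, mn.2] : Fin 2 → ℤ)‖ ^ 2 := by nlinarith
    calc (0:ℝ) < δ ^ 2 := hδ2
      _ = δ ^ 2 * 1 := (mul_one _).symm
      _ ≤ δ ^ 2 * ‖(![mn.1, mn.2] : Fin 2 → ℤ)‖ ^ 2 :=
          mul_le_mul_of_nonneg_left h2 hδ2.le
      _ ≤ R mn := h
  have hbpos : ∀ mn : ℤ × ℤ, mn ≠ 0 → 0 < b mn := fun mn hmn =>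
    div_pos (hRpos mn hmn) hA2
  have hcnorm : ∀ mn : ℤ × ℤ, mn ≠ 0 → ‖c mn‖ = (R mn)⁻¹ := by
    intro mn hmn
    rw [hc]
    simp only [norm_div, Complex.norm_real]
    rw [show ‖ψ mn‖ = 1 from habs mn, Real.norm_of_nonneg (hRpos mn hmn).le, one_div]
  -- f as indicator
  have hfind : ∀ mn : ℤ × ℤ, mn ≠ 0 →
      f mn = (Set.Ici (b mn)).indicator (fun u => k (1 + u) * c mn) := by
    intro mn hmn
    funext u
    have hiff : (mn ≠ 0 ∧ R mn ≤ 2 * A ^ 2 * u) ↔ u ∈ Set.Ici (b mn) := by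
      rw [Set.mem_Ici, hb]
      simp only [hmn, ne_eq, not_false_eq_true, true_and]
      rw [div_le_iff₀ hA2, mul_comm]
    rw [hf]
    simp only [Set.indicator]
    by_cases h : u ∈ Set.Ici (b mn)
    · rw [if_pos h, if_pos (hiff.mpr h)]
    · rw [if_neg h, if_neg (fun hh => h (hiff.mp hh)), mul_zero]
  have hf0 : ∀ mn : ℤ × ℤ, mn = 0 → f mn = fun _ => 0 := by
    intro mn hmn
    funext u
    rw [hf]
    simp [hmn]
  -- integrability of the kernel on Ici t for t ≥ 0
  have hker : ∀ t : ℝ, 0 ≤ t → IntegrableOn (fun u => k (1 + u)) (Set.Ici t) := by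
    intro t ht
    have hmaj : IntegrableOn (fun u : ℝ => C * ((1+u)^4)⁻¹) (Set.Ici t) := by
      rw [integrableOn_Ici_iff_integrableOn_Ioi]
      exact (aux_int ht).1.const_mul C
    refine Integrable.mono' hmaj ?_ ?_
    · refine ContinuousOn.aestronglyMeasurable ?_ measurableSet_Ici
      refine hk.comp (continuous_const.add continuous_id).continuousOn ?_
      intro u hu
      simp only [Set.mem_Ici] at hu ⊢
      linarith
    · filter_upwards [ae_restrict_mem measurableSet_Ici] with u hu
      have h1u : (1:ℝ) ≤ 1 + u := by
        simp only [Set.mem_Ici] at hu; linarith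
      calc ‖k (1 + u)‖ ≤ C / (1 + u) ^ 4 := hbound _ h1u
        _ = C * ((1+u)^4)⁻¹ := div_eq_mul_inv _ _
  -- bound on the norm integral
  have hnormint : ∀ t : ℝ, 0 ≤ t →
      ∫ u in Set.Ioi t, ‖k (1 + u)‖ ≤ C * (((1+t)^3)⁻¹ / 3) := by
    intro t ht
    have hint1 : IntegrableOn (fun u => ‖k (1 + u)‖) (Set.Ioi t) :=
      MeasureTheory.IntegrableOn.mono_set ((hker t ht).norm) Set.Ioi_subset_Ici_self
    have hint2 : IntegrableOn (fun u : ℝ => C * ((1+u)^4)⁻¹) (Set.Ioi t) :=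
      (aux_int ht).1.const_mul C
    calc ∫ u in Set.Ioi t, ‖k (1 + u)‖
        ≤ ∫ u in Set.Ioi t, C * ((1+u)^4)⁻¹ := by
          refine setIntegral_mono_on hint1 hint2 measurableSet_Ioi ?_
          intro u hu
          have h1u : (1:ℝ) ≤ 1 + u := by
            simp only [Set.mem_Ioi] at hu; linarith
          calc ‖k (1 + u)‖ ≤ C / (1 + u) ^ 4 := hbound _ h1u
            _ = C * ((1+u)^4)⁻¹ := div_eq_mul_inv _ _
      _ = C * (((1+t)^3)⁻¹ / 3) := by
          rw [integral_const_mul, (aux_int ht).2]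
  -- integrability of f mn
  have hF_int : ∀ mn : ℤ × ℤ, Integrable (f mn) (volume.restrict (Set.Ioi (0:ℝ))) := by
    intro mn
    by_cases hmn : mn = 0
    · rw [hf0 mn hmn]
      exact integrable_zero _ _ _
    · rw [hfind mn hmn]
      have h1 : IntegrableOn (fun u => k (1 + u) * c mn) (Set.Ici (b mn)) :=
        (hker (b mn) (hbpos mn hmn).le).mul_const (c mn)
      exact (h1.integrable_indicator measurableSet_Ici).restrict
  -- value of the integral of f mn
  have hIci_sub : ∀ mn : ℤ × ℤ, mn ≠ 0 → Set.Ici (b mn) ∩ Set.Ioi (0:ℝ) = Set.Ici (b mn) := by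
    intro mn hmn
    apply Set.inter_eq_left.mpr
    intro x hx
    exact lt_of_lt_of_le (hbpos mn hmn) hx
  have hint_eq : ∀ mn : ℤ × ℤ, mn ≠ 0 →
      ∫ u in Set.Ioi (0:ℝ), f mn u = c mn * ∫ u in Set.Ioi (b mn), k (1 + u) := by
    intro mn hmn
    rw [hfind mn hmn, integral_indicator measurableSet_Ici,
      Measure.restrict_restrict measurableSet_Ici, hIci_sub mn hmn,
      integral_Ici_eq_integral_Ioi, integral_mul_const, mul_comm]
  have hnorm_eq : ∀ mn : ℤ × ℤ, mn ≠ 0 →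
      ∫ u in Set.Ioi (0:ℝ), ‖f mn u‖ = (R mn)⁻¹ * ∫ u in Set.Ioi (b mn), ‖k (1 + u)‖ := by
    intro mn hmn
    have hh : (fun u => ‖f mn u‖) =
        (Set.Ici (b mn)).indicator (fun u => ‖k (1 + u)‖ * (R mn)⁻¹) := by
      funext u
      rw [hfind mn hmn, norm_indicator_eq_indicator_norm]
      congr 1
      funext v
      rw [norm_mul, hcnorm mn hmn]
    rw [hh, integral_indicator measurableSet_Ici,
      Measure.restrict_restrict measurableSet_Ici, hIci_sub mn hmn,
      integral_Ici_eq_integral_Ioi, integral_mul_const, mul_comm]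
  -- summability of the norm integrals
  set K : ℝ := C / 3 * ((2 * A ^ 2) ^ 3 / δ ^ 8) with hK
  have hF_sum : Summable (fun mn : ℤ × ℤ => ∫ u in Set.Ioi (0:ℝ), ‖f mn u‖) := by
    refine Summable.of_nonneg_of_le
      (fun mn => integral_nonneg (fun u => norm_nonneg _)) ?_ (aux_summable.mul_left K)
    intro mn
    by_cases hmn : mn = 0
    · rw [hf0 mn hmn, hmn]
      have h0 : ‖(![((0:ℤ×ℤ)).1, ((0:ℤ×ℤ)).2] : Fin 2 → ℤ)‖ = 0 := by
        have : (![((0:ℤ×ℤ)).1, ((0:ℤ×ℤ)).2] : Fin 2 → ℤ) = 0 := by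
          funext i; fin_cases i <;> simp
        rw [this, norm_zero]
      rw [h0, Real.zero_rpow (by norm_num : (-8:ℝ) ≠ 0), mul_zero]
      simp
    · rw [hnorm_eq mn hmn]
      have hv1 : 1 ≤ ‖(![mn.1, mn.2] : Fin 2 → ℤ)‖ := hnorm1 mn hmn
      have hv0 : 0 < ‖(![mn.1, mn.2] : Fin 2 → ℤ)‖ := lt_of_lt_of_le one_pos hv1
      have hRlbv : δ ^ 2 * ‖(![mn.1, mn.2] : Fin 2 → ℤ)‖ ^ 2 ≤ R mn := hRlb mn hmn
      have hRp : 0 < R mn := hRpos mn hmn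
      have hbp : 0 < b mn := hbpos mn hmn
      have hrw : ‖(![mn.1, mn.2] : Fin 2 → ℤ)‖ ^ (-8:ℝ)
          = ((‖(![mn.1, mn.2] : Fin 2 → ℤ)‖ ^ 2) ^ 4)⁻¹ := by
        rw [show (-8:ℝ) = -((8:ℕ):ℝ) by norm_num, Real.rpow_neg (norm_nonneg _),
          Real.rpow_natCast]
        norm_num [← pow_mul]
      have step1 : ∫ u in Set.Ioi (b mn), ‖k (1 + u)‖ ≤ C * ((b mn ^ 3)⁻¹ / 3) := by
        refine le_trans (hnormint (b mn) hbp.le) ?_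
        have h2 : ((1 + b mn) ^ 3)⁻¹ ≤ (b mn ^ 3)⁻¹ := by
          rw [inv_le_inv₀ (by positivity) (by positivity)]
          nlinarith
        gcongr
      have step2 : (R mn)⁻¹ * (C * ((b mn ^ 3)⁻¹ / 3))
          = C / 3 * ((2 * A ^ 2) ^ 3 / R mn ^ 4) := by
        rw [hb]
        have hRne : R mn ≠ 0 := ne_of_gt hRp
        field_simp
        try tauto
      have step3 : C / 3 * ((2 * A ^ 2) ^ 3 / R mn ^ 4)
          ≤ K * ‖(![mn.1, mn.2] : Fin 2 → ℤ)‖ ^ (-8:ℝ) := by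
        rw [hK, hrw]
        have hR4 : (δ ^ 2 * ‖(![mn.1, mn.2] : Fin 2 → ℤ)‖ ^ 2) ^ 4 ≤ R mn ^ 4 :=
          pow_le_pow_left₀ (by positivity) hRlbv 4
        have heq : C / 3 * ((2 * A ^ 2) ^ 3 / δ ^ 8)
              * ((‖(![mn.1, mn.2] : Fin 2 → ℤ)‖ ^ 2) ^ 4)⁻¹
            = C / 3 * ((2 * A ^ 2) ^ 3
              / ((δ ^ 2 * ‖(![mn.1, mn.2] : Fin 2 → ℤ)‖ ^ 2) ^ 4)) := by
          have hδne : δ ≠ 0 := ne_of_gt hδ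
          have hvne' : ‖(![mn.1, mn.2] : Fin 2 → ℤ)‖ ≠ 0 := ne_of_gt hv0
          field_simp
          try tauto
        rw [heq]
        gcongr
      calc (R mn)⁻¹ * ∫ u in Set.Ioi (b mn), ‖k (1 + u)‖
          ≤ (R mn)⁻¹ * (C * ((b mn ^ 3)⁻¹ / 3)) := by
            have h0 : (0:ℝ) ≤ (R mn)⁻¹ := inv_nonneg.mpr hRp.le
            exact mul_le_mul_of_nonneg_left step1 h0
        _ = C / 3 * ((2 * A ^ 2) ^ 3 / R mn ^ 4) := step2
        _ ≤ K * ‖(![mn.1, mn.2] : Fin 2 → ℤ)‖ ^ (-8:ℝ) := step3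
  -- the main HasSum
  have hmain := MeasureTheory.hasSum_integral_of_summable_integral_norm hF_int hF_sum
  constructor
  · refine Summable.of_nonneg_of_le (fun mn => norm_nonneg _) ?_ hF_sum
    intro mn
    by_cases hmn : mn = 0
    · rw [if_pos hmn, norm_zero]
      exact integral_nonneg (fun u => norm_nonneg _)
    · rw [if_neg hmn, hnorm_eq mn hmn]
      show ‖c mn * ∫ u in Set.Ioi (b mn), k (1 + u)‖ ≤ _
      rw [norm_mul, hcnorm mn hmn]
      have h0 : (0:ℝ) ≤ (R mn)⁻¹ := inv_nonneg.mpr (hRpos mn hmn).le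
      exact mul_le_mul_of_nonneg_left (norm_integral_le_integral_norm _) h0
  · have h1 : (∑' mn : ℤ × ℤ,
        if mn = 0 then 0 else
          ψ mn / ((‖(mn.1 : ℂ) * τ + (mn.2 : ℂ)‖ ^ 2 : ℝ) : ℂ) *
            ∫ u in Set.Ioi (‖(mn.1 : ℂ) * τ + (mn.2 : ℂ)‖ ^ 2 / (2 * A ^ 2)),
              k (1 + u))
        = ∑' mn : ℤ × ℤ, ∫ u in Set.Ioi (0:ℝ), f mn u := by
      apply tsum_congr
      intro mn
      by_cases hmn : mn = 0
      · rw [if_pos hmn, hf0 mn hmn]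
        simp
      · rw [if_neg hmn, hint_eq mn hmn]
    rw [h1, hmain.tsum_eq]
    refine integral_congr_ae (Filter.Eventually.of_forall fun u => ?_)
    simp only [latticeZ]
    rw [← tsum_mul_left]
end

section
/- Let Λ = ℤ ⊕ ℤτ ⊂ ℂ be a lattice with Im τ > 0, let ψ be a nontrivial character of Λ, and let k : [1,∞) → ℂ be continuous with |k(t)| ≤ C t^{−4} for some constant C and all t ≥ 1. Then lim_{A→∞} Σ_{μ∈Λ, μ≠0} ψ(μ) · ∫₀^A k( 1 + |μ|²/(2r²) ) · r^{−3} dr = L(Λ,ψ) · ∫₀^∞ k(1+u) du, where for each A > 0 the sum over μ converges absolutely. -/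
section Aux
open MeasureTheory Set Filter Complex

noncomputable def latQ (τ : ℂ) (mn : ℤ × ℤ) : ℝ :=
  ‖(mn.1 : ℂ) * τ + (mn.2 : ℂ)‖ ^ 2

lemma latQ_lb (τ : ℂ) (hτ : 0 < τ.im) :
    ∃ c : ℝ, 0 < c ∧ ∀ mn : ℤ × ℤ, mn ≠ 0 →
      c * ‖![mn.1, mn.2]‖ ^ 2 ≤ latQ τ mn ∧ (1:ℝ) ≤ ‖![mn.1, mn.2]‖ := by
  set z : UpperHalfPlane := ⟨τ, hτ⟩
  refine ⟨(EisensteinSeries.r z) ^ 2, pow_pos (EisensteinSeries.r_pos z) 2, fun mn hmn => ?_⟩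
  have hx : (![mn.1, mn.2] : Fin 2 → ℤ) ≠ 0 := by
    simp only [ne_eq, funext_iff, Fin.forall_fin_two]
    simp only [Matrix.cons_val_zero, Matrix.cons_val_one, Matrix.head_cons, Pi.zero_apply]
    intro h
    exact hmn (Prod.ext h.1 h.2)
  have h1 : (1:ℝ) ≤ ‖![mn.1, mn.2]‖ := by
    rw [EisensteinSeries.norm_eq_max_natAbs]
    have : (![mn.1, mn.2] 0).natAbs ≠ 0 ∨ (![mn.1, mn.2] 1).natAbs ≠ 0 := by
      by_contra h
      push_neg at h
      apply hx
      funext i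
      fin_cases i <;> simp [Int.natAbs_eq_zero.mp h.1, Int.natAbs_eq_zero.mp h.2]
    have : 1 ≤ max (![mn.1, mn.2] 0).natAbs (![mn.1, mn.2] 1).natAbs := by
      rcases this with h | h
      · exact le_max_of_le_left (Nat.one_le_iff_ne_zero.2 h)
      · exact le_max_of_le_right (Nat.one_le_iff_ne_zero.2 h)
    exact_mod_cast this
  refine ⟨?_, h1⟩
  have := EisensteinSeries.r_mul_max_le z hx
  have hz : (z : ℂ) = τ := rfl
  simp only [Matrix.cons_val_zero, Matrix.cons_val_one, Matrix.head_cons, hz] at this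
  have hr := EisensteinSeries.r_pos z
  have hnn : (0:ℝ) ≤ EisensteinSeries.r z * ‖![mn.1, mn.2]‖ := by positivity
  calc EisensteinSeries.r z ^ 2 * ‖![mn.1, mn.2]‖ ^ 2
      = (EisensteinSeries.r z * ‖![mn.1, mn.2]‖) ^ 2 := by ring
    _ ≤ ‖(mn.1 : ℂ) * τ + (mn.2 : ℂ)‖ ^ 2 := by
        apply pow_le_pow_left₀ hnn this
    _ = latQ τ mn := rfl

lemma summable_norm_rpow_neg8 :
    Summable fun mn : ℤ × ℤ => ‖![mn.1, mn.2]‖ ^ (-(8:ℝ)) := by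
  have h := EisensteinSeries.summable_one_div_norm_rpow (by norm_num : (2:ℝ) < 8)
  have := ((finTwoArrowEquiv ℤ).symm.summable_iff
    (f := fun x : Fin 2 → ℤ => ‖x‖ ^ (-(8:ℝ)))).2 h
  refine this.congr fun mn => ?_
  simp [finTwoArrowEquiv_symm_apply]

lemma latQ_summable_inv_pow4 (τ : ℂ) (hτ : 0 < τ.im) :
    Summable fun mn : ℤ × ℤ => if mn = 0 then (0:ℝ) else (latQ τ mn ^ 4)⁻¹ := by
  obtain ⟨c, hc, hcb⟩ := latQ_lb τ hτ
  have hsum := (summable_norm_rpow_neg8.mul_left ((c ^ 4)⁻¹))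
  refine Summable.of_nonneg_of_le (fun mn => by positivity) (fun mn => ?_) hsum
  by_cases hmn : mn = 0
  · simp only [hmn, if_pos rfl]
    positivity
  · obtain ⟨hq, h1⟩ := hcb mn hmn
    rw [if_neg hmn]
    have hv : (0:ℝ) < ‖![mn.1, mn.2]‖ := lt_of_lt_of_le one_pos h1
    have hrw : ‖![mn.1, mn.2]‖ ^ (-(8:ℝ)) = (‖![mn.1, mn.2]‖ ^ (8:ℕ))⁻¹ := by
      rw [Real.rpow_neg (norm_nonneg _)]
      norm_cast
    rw [hrw, ← mul_inv]
    have key : c ^ 4 * ‖![mn.1, mn.2]‖ ^ (8:ℕ) ≤ latQ τ mn ^ 4 := by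
      have := pow_le_pow_left₀ (by positivity) hq 4
      calc c ^ 4 * ‖![mn.1, mn.2]‖ ^ (8:ℕ) = (c * ‖![mn.1, mn.2]‖ ^ 2) ^ 4 := by ring
        _ ≤ latQ τ mn ^ 4 := this
    exact inv_anti₀ (by positivity) key

lemma latQ_finite_le (τ : ℂ) (hτ : 0 < τ.im) (x : ℝ) :
    {mn : ℤ × ℤ | mn ≠ 0 ∧ latQ τ mn ≤ x}.Finite := by
  obtain ⟨c, hc, hcb⟩ := latQ_lb τ hτ
  set N : ℕ := ⌈Real.sqrt (x / c)⌉₊ with hN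
  apply Set.Finite.subset (Set.finite_Icc ((-(N:ℤ), -(N:ℤ))) ((N:ℤ), (N:ℤ)))
  rintro mn ⟨hmn, hle⟩
  obtain ⟨hq, h1⟩ := hcb mn hmn
  have hn2 : ‖![mn.1, mn.2]‖ ^ 2 ≤ x / c := by
    rw [le_div_iff₀ hc]
    linarith [hq, hle]
  have hnorm : ‖![mn.1, mn.2]‖ ≤ Real.sqrt (x / c) := by
    rw [← Real.sqrt_sq (norm_nonneg _)]
    exact Real.sqrt_le_sqrt hn2
  have hmax : ((max (mn.1.natAbs) (mn.2.natAbs) : ℕ) : ℝ) ≤ Real.sqrt (x / c) := by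
    refine le_trans (le_of_eq ?_) hnorm
    rw [EisensteinSeries.norm_eq_max_natAbs]
    simp
  have hmaxN : max (mn.1.natAbs) (mn.2.natAbs) ≤ N := by
    exact_mod_cast le_trans hmax (Nat.le_ceil _)
  have h1N : mn.1.natAbs ≤ N := le_trans (le_max_left _ _) hmaxN
  have h2N : mn.2.natAbs ≤ N := le_trans (le_max_right _ _) hmaxN
  have e1 : -(N:ℤ) ≤ mn.1 ∧ mn.1 ≤ N := by
    constructor <;> [exact neg_le_of_abs_le (by rw [Int.abs_eq_natAbs]; exact_mod_cast h1N);
      exact le_of_abs_le (by rw [Int.abs_eq_natAbs]; exact_mod_cast h1N)]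
  have e2 : -(N:ℤ) ≤ mn.2 ∧ mn.2 ≤ N := by
    constructor <;> [exact neg_le_of_abs_le (by rw [Int.abs_eq_natAbs]; exact_mod_cast h2N);
      exact le_of_abs_le (by rw [Int.abs_eq_natAbs]; exact_mod_cast h2N)]
  simp only [Set.mem_Icc, Prod.le_def]
  exact ⟨⟨e1.1, e2.1⟩, ⟨e1.2, e2.2⟩⟩

lemma summable_ite_latQ {E : Type*} [NormedAddCommGroup E] (τ : ℂ) (hτ : 0 < τ.im) (x : ℝ)
    (p : ℤ × ℤ → Prop) [DecidablePred p] (hp : ∀ mn, p mn → mn ≠ 0 ∧ latQ τ mn ≤ x)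
    (f : ℤ × ℤ → E) : Summable fun mn => if p mn then f mn else 0 := by
  apply summable_of_ne_finset_zero (s := (latQ_finite_le τ hτ x).toFinset)
  intro mn h
  refine if_neg (fun hpmn => h ?_)
  rw [Set.Finite.mem_toFinset]
  exact hp mn hpmn

lemma latticeZ_eq (τ : ℂ) (ψ : ℤ × ℤ → ℂ) (x : ℝ) :
    latticeZ τ ψ x = ∑' mn : ℤ × ℤ,
      if mn ≠ 0 ∧ latQ τ mn ≤ x then ψ mn / ((latQ τ mn : ℝ) : ℂ) else 0 := rfl

lemma norm_Zterm (τ : ℂ) (hτ : 0 < τ.im) (ψ : ℤ × ℤ → ℂ)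
    (habs : ∀ a : ℤ × ℤ, ‖ψ a‖ = 1) {mn : ℤ × ℤ} (hmn : mn ≠ 0) :
    ‖ψ mn / ((latQ τ mn : ℝ) : ℂ)‖ = (latQ τ mn)⁻¹ := by
  obtain ⟨c, hc, hcb⟩ := latQ_lb τ hτ
  have hQpos : 0 < latQ τ mn := by
    obtain ⟨hq, h1⟩ := hcb mn hmn
    have h2 : 1 ≤ ‖![mn.1, mn.2]‖ ^ 2 := one_le_pow₀ h1
    nlinarith
  rw [norm_div, habs mn, Complex.norm_real,
    Real.norm_of_nonneg hQpos.le, one_div]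

lemma latQ_pos (τ : ℂ) (hτ : 0 < τ.im) {mn : ℤ × ℤ} (hmn : mn ≠ 0) : 0 < latQ τ mn := by
  obtain ⟨c, hc, hcb⟩ := latQ_lb τ hτ
  obtain ⟨hq, h1⟩ := hcb mn hmn
  have h2 : 1 ≤ ‖![mn.1, mn.2]‖ ^ 2 := one_le_pow₀ h1
  nlinarith

lemma Z_bdd (τ : ℂ) (hτ : 0 < τ.im) (ψ : ℤ × ℤ → ℂ)
    (habs : ∀ a : ℤ × ℤ, ‖ψ a‖ = 1) {L : ℂ}
    (hL : Filter.Tendsto (fun x : ℝ => latticeZ τ ψ x) Filter.atTop (nhds L)) :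
    ∃ B : ℝ, ∀ x : ℝ, ‖latticeZ τ ψ x‖ ≤ B := by
  obtain ⟨x₀, hx₀⟩ := (Metric.tendsto_atTop.mp hL 1 one_pos)
  classical
  set T : ℝ := ∑' mn : ℤ × ℤ, (if mn ≠ 0 ∧ latQ τ mn ≤ x₀ then (latQ τ mn)⁻¹ else 0) with hT
  refine ⟨max (‖L‖ + 1) T, fun x => ?_⟩
  rcases le_total x x₀ with hx | hx
  · refine le_trans ?_ (le_max_right _ _)
    rw [latticeZ_eq]
    have hsn : Summable fun mn : ℤ × ℤ =>
        ‖if mn ≠ 0 ∧ latQ τ mn ≤ x then ψ mn / ((latQ τ mn : ℝ) : ℂ) else 0‖ := by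
      have := summable_ite_latQ τ hτ x (fun mn => mn ≠ 0 ∧ latQ τ mn ≤ x) (fun mn h => h)
        (fun mn => ψ mn / ((latQ τ mn : ℝ) : ℂ))
      refine this.norm.congr fun mn => ?_
      rfl
    refine le_trans (norm_tsum_le_tsum_norm hsn) ?_
    have hsT : Summable fun mn : ℤ × ℤ =>
        (if mn ≠ 0 ∧ latQ τ mn ≤ x₀ then (latQ τ mn)⁻¹ else 0) :=
      summable_ite_latQ τ hτ x₀ _ (fun mn h => h) _
    refine Summable.tsum_le_tsum (fun mn => ?_) hsn hsT
    by_cases h : mn ≠ 0 ∧ latQ τ mn ≤ x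
    · rw [if_pos h, if_pos ⟨h.1, le_trans h.2 hx⟩, norm_Zterm τ hτ ψ habs h.1]
    · rw [if_neg h, norm_zero]
      by_cases h' : mn ≠ 0 ∧ latQ τ mn ≤ x₀
      · rw [if_pos h']
        exact inv_nonneg.mpr (latQ_pos τ hτ h'.1).le
      · rw [if_neg h']
  · refine le_trans ?_ (le_max_left _ _)
    have := hx₀ x hx
    rw [dist_eq_norm] at this
    calc ‖latticeZ τ ψ x‖ = ‖latticeZ τ ψ x - L + L‖ := by ring_nf
      _ ≤ ‖latticeZ τ ψ x - L‖ + ‖L‖ := norm_add_le _ _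
      _ ≤ ‖L‖ + 1 := by linarith

lemma Z_meas (τ : ℂ) (hτ : 0 < τ.im) (ψ : ℤ × ℤ → ℂ) :
    Measurable (fun x : ℝ => latticeZ τ ψ x) := by
  classical
  let e : ℕ ≃ ℤ × ℤ := (Denumerable.eqv (ℤ × ℤ)).symm
  let g : ℤ × ℤ → ℝ → ℂ := fun mn x =>
    if mn ≠ 0 ∧ latQ τ mn ≤ x then ψ mn / ((latQ τ mn : ℝ) : ℂ) else 0
  apply measurable_of_tendsto_metrizable
    (f := fun n x => ∑ i ∈ Finset.range n, g (e i) x)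
  · intro n
    apply Finset.measurable_sum
    intro i _
    have : MeasurableSet {x : ℝ | e i ≠ 0 ∧ latQ τ (e i) ≤ x} := by
      by_cases h : e i ≠ 0
      · have : {x : ℝ | e i ≠ 0 ∧ latQ τ (e i) ≤ x} = Set.Ici (latQ τ (e i)) := by
          ext x; simp [h]
        rw [this]; exact measurableSet_Ici
      · have : {x : ℝ | e i ≠ 0 ∧ latQ τ (e i) ≤ x} = ∅ := by
          ext x; simp [h]
        rw [this]; exact MeasurableSet.empty
    exact Measurable.ite this measurable_const measurable_const
  · rw [tendsto_pi_nhds]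
    intro x
    have hsum : Summable fun mn => g mn x :=
      summable_ite_latQ τ hτ x _ (fun mn h => h) _
    have hhs : HasSum (fun mn => g mn x) (latticeZ τ ψ x) := by
      rw [latticeZ_eq]
      exact hsum.hasSum
    exact ((Equiv.hasSum_iff e).mpr hhs).tendsto_sum_nat

section klemmas
variable {k : ℝ → ℂ} {C : ℝ}

lemma k_cont_shift (hk : ContinuousOn k (Set.Ici 1)) :
    ContinuousOn (fun u : ℝ => k (1 + u)) (Set.Ici 0) := by
  apply hk.comp (continuous_const.add continuous_id).continuousOn
  intro u hu
  simp only [Set.mem_Ici, id_eq, Pi.add_apply] at hu ⊢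
  linarith

lemma C_nonneg (hbound : ∀ t : ℝ, 1 ≤ t → ‖k t‖ ≤ C / t ^ 4) : 0 ≤ C := by
  have := hbound 1 le_rfl
  simp at this
  exact le_trans (norm_nonneg _) this

lemma k_shift_integrable (hk : ContinuousOn k (Set.Ici 1))
    (hbound : ∀ t : ℝ, 1 ≤ t → ‖k t‖ ≤ C / t ^ 4) :
    IntegrableOn (fun u : ℝ => k (1 + u)) (Set.Ioi 0) := by
  have hC := C_nonneg hbound
  have hmeas : ∀ s : Set ℝ, MeasurableSet s → s ⊆ Set.Ici 0 →
      AEStronglyMeasurable (fun u : ℝ => k (1 + u)) (volume.restrict s) := fun s hs hsub =>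
    ((k_cont_shift hk).mono hsub).aestronglyMeasurable hs
  have h1 : IntegrableOn (fun u : ℝ => k (1 + u)) (Set.Ioc 0 1) := by
    refine Integrable.mono' (integrableOn_const (C := C) measure_Ioc_lt_top.ne)
      (hmeas _ measurableSet_Ioc (Set.Ioc_subset_Icc_self.trans (Set.Icc_subset_Ici_self))) ?_
    refine (ae_restrict_iff' measurableSet_Ioc).mpr (Filter.Eventually.of_forall fun u hu => ?_)
    have h1u : (1:ℝ) ≤ 1 + u := by linarith [hu.1.le]
    refine le_trans (hbound _ h1u) ?_
    rw [div_le_iff₀ (by positivity)]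
    nlinarith [pow_le_pow_left₀ (by norm_num : (0:ℝ) ≤ 1) h1u 4]
  have h2 : IntegrableOn (fun u : ℝ => k (1 + u)) (Set.Ioi 1) := by
    have hint : IntegrableOn (fun u : ℝ => C * u ^ (-4:ℝ)) (Set.Ioi 1) :=
      (integrableOn_Ioi_rpow_of_lt (by norm_num) one_pos).const_mul C
    refine Integrable.mono' hint
      (hmeas _ measurableSet_Ioi (Set.Ioi_subset_Ici (by norm_num))) ?_
    refine (ae_restrict_iff' measurableSet_Ioi).mpr (Filter.Eventually.of_forall fun u hu => ?_)
    rw [Set.mem_Ioi] at hu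
    have hu0 : (0:ℝ) < u := lt_trans one_pos hu
    have h1u : (1:ℝ) ≤ 1 + u := by linarith
    refine le_trans (hbound _ h1u) ?_
    have hrw : C * u ^ (-4:ℝ) = C / u ^ (4:ℕ) := by
      rw [Real.rpow_neg hu0.le, div_eq_mul_inv]
      congr 2
      rw [← Real.rpow_natCast]
      norm_num
    rw [hrw]
    have h4 : (u:ℝ) ^ (4:ℕ) ≤ (1+u) ^ 4 := by nlinarith [pow_pos hu0 3, pow_pos hu0 2, hu0]
    rw [div_le_div_iff₀ (by positivity) (by positivity)]
    nlinarith [mul_le_mul_of_nonneg_left h4 hC]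

  have := h1.union h2
  rwa [Set.Ioc_union_Ioi_eq_Ioi zero_le_one] at this

end klemmas

section subst
variable {k : ℝ → ℂ} {C : ℝ}

lemma subst_aux {q A : ℝ} (hq : 0 < q) (hA : 0 < A) :
    (∀ r ∈ Set.Ioc (0:ℝ) A, HasDerivWithinAt (fun r : ℝ => q / (2 * r ^ 2))
        (-(q / r ^ 3)) (Set.Ioc (0:ℝ) A) r) ∧
      Set.InjOn (fun r : ℝ => q / (2 * r ^ 2)) (Set.Ioc (0:ℝ) A) ∧
      (fun r : ℝ => q / (2 * r ^ 2)) '' (Set.Ioc (0:ℝ) A) = Set.Ici (q / (2 * A ^ 2)) := by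
  have hfun : (fun r : ℝ => q / (2 * r ^ 2)) = fun r : ℝ => (q / 2) * (r ^ 2)⁻¹ := by
    funext r
    rw [div_mul_eq_div_div, div_eq_mul_inv]
  refine ⟨fun r hr => ?_, ?_, ?_⟩
  · have hr0 : 0 < r := hr.1
    have h1 := ((hasDerivAt_pow 2 r).inv (pow_ne_zero 2 hr0.ne')).const_mul (q / 2)
    simp only [Pi.inv_apply] at h1
    rw [← hfun] at h1
    refine h1.hasDerivWithinAt.congr_deriv ?_
    have : (r^2)^2 = r^4 := by ring
    field_simp
    ring
  · apply StrictAntiOn.injOn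
    intro r1 hr1 r2 hr2 h12
    apply div_lt_div_of_pos_left hq (mul_pos two_pos (pow_pos hr1.1 2))
    nlinarith [hr1.1, hr2.1]
  · ext u
    constructor
    · rintro ⟨r, hr, rfl⟩
      simp only [Set.mem_Ici]
      rw [div_le_div_iff₀ (by positivity) (mul_pos two_pos (pow_pos hr.1 2))]
      have h2 : r ^ 2 ≤ A ^ 2 := by nlinarith [hr.1, hr.2]
      nlinarith [mul_le_mul_of_nonneg_left h2 hq.le]
    · intro hu
      rw [Set.mem_Ici] at hu
      have hc : 0 < q / (2 * A ^ 2) := by positivity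
      have hu0 : 0 < u := lt_of_lt_of_le hc hu
      refine ⟨Real.sqrt (q / (2 * u)), ⟨Real.sqrt_pos.mpr (by positivity), ?_⟩, ?_⟩
      · rw [show A = Real.sqrt (A ^ 2) by rw [Real.sqrt_sq hA.le]]
        apply Real.sqrt_le_sqrt
        rw [div_le_iff₀ (by positivity)]
        rw [div_le_iff₀ (by positivity)] at hu
        nlinarith
      · show q / (2 * Real.sqrt (q / (2 * u)) ^ 2) = u
        rw [Real.sq_sqrt (by positivity : (0:ℝ) ≤ q / (2 * u))]
        field_simp

lemma pointwise_smul_eq {q A : ℝ} (hq : 0 < q) (k : ℝ → ℂ) {r : ℝ} (hr : r ∈ Set.Ioc (0:ℝ) A) :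
    q⁻¹ • (|(-(q / r ^ 3))| • k (1 + q / (2 * r ^ 2))) = k (1 + q / (2 * r ^ 2)) / ((r:ℂ) ^ 3) := by
  have hr0 : 0 < r := hr.1
  rw [abs_neg, abs_of_pos (by positivity), smul_smul]
  have : q⁻¹ * (q / r ^ 3) = (r ^ 3)⁻¹ := by field_simp
  rw [this, Complex.real_smul, Complex.ofReal_inv, Complex.ofReal_pow]
  ring

lemma subst_integrable (hk : ContinuousOn k (Set.Ici 1))
    (hbound : ∀ t : ℝ, 1 ≤ t → ‖k t‖ ≤ C / t ^ 4) {q A : ℝ} (hq : 0 < q) (hA : 0 < A) :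
    IntegrableOn (fun r : ℝ => k (1 + q / (2 * r ^ 2)) / ((r:ℂ) ^ 3)) (Set.Ioc 0 A) := by
  obtain ⟨hderiv, hinj, himg⟩ := subst_aux hq hA
  have hiff := integrableOn_image_iff_integrableOn_abs_deriv_smul measurableSet_Ioc hderiv hinj
    (fun u => k (1 + u))
  rw [himg] at hiff
  have hIci : IntegrableOn (fun u : ℝ => k (1 + u)) (Set.Ici (q / (2 * A ^ 2))) :=
    (k_shift_integrable hk hbound).mono_set (Set.Ici_subset_Ioi.mpr (by positivity))
  have hint := (hiff.mp hIci).smul (q⁻¹ : ℝ)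
  refine hint.congr ((ae_restrict_iff' measurableSet_Ioc).mpr
    (Filter.Eventually.of_forall fun r hr => ?_))
  exact pointwise_smul_eq hq k hr

lemma subst_eq (hk : ContinuousOn k (Set.Ici 1))
    (hbound : ∀ t : ℝ, 1 ≤ t → ‖k t‖ ≤ C / t ^ 4) {q A : ℝ} (hq : 0 < q) (hA : 0 < A) :
    (∫ r in Set.Ioc (0:ℝ) A, k (1 + q / (2 * r ^ 2)) / ((r:ℂ) ^ 3)) =
      ((q⁻¹ : ℝ) : ℂ) * ∫ u in Set.Ioi (q / (2 * A ^ 2)), k (1 + u) := by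
  obtain ⟨hderiv, hinj, himg⟩ := subst_aux hq hA
  have heq := integral_image_eq_integral_abs_deriv_smul measurableSet_Ioc hderiv hinj
    (fun u => k (1 + u))
  rw [himg] at heq
  calc (∫ r in Set.Ioc (0:ℝ) A, k (1 + q / (2 * r ^ 2)) / ((r:ℂ) ^ 3))
      = ∫ r in Set.Ioc (0:ℝ) A, q⁻¹ • (|(-(q / r ^ 3))| • k (1 + q / (2 * r ^ 2))) := by
        refine setIntegral_congr_fun measurableSet_Ioc (fun r hr => ?_)
        exact (pointwise_smul_eq hq k hr).symm
    _ = q⁻¹ • ∫ r in Set.Ioc (0:ℝ) A, |(-(q / r ^ 3))| • k (1 + q / (2 * r ^ 2)) :=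
        integral_smul _ _
    _ = q⁻¹ • ∫ u in Set.Ici (q / (2 * A ^ 2)), k (1 + u) := by rw [← heq]
    _ = q⁻¹ • ∫ u in Set.Ioi (q / (2 * A ^ 2)), k (1 + u) := by
        rw [integral_Ici_eq_integral_Ioi]
    _ = ((q⁻¹ : ℝ) : ℂ) * ∫ u in Set.Ioi (q / (2 * A ^ 2)), k (1 + u) := by
        rw [Complex.real_smul]

end subst

section part1
variable {k : ℝ → ℂ} {C : ℝ}

lemma norm_integral_bd (hk : ContinuousOn k (Set.Ici 1))
    (hbound : ∀ t : ℝ, 1 ≤ t → ‖k t‖ ≤ C / t ^ 4) {q A : ℝ} (hq : 0 < q) (hA : 0 < A) :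
    ‖∫ r in Set.Ioc (0:ℝ) A, k (1 + q / (2 * r ^ 2)) / ((r:ℂ) ^ 3)‖ ≤
      16 * C / q ^ 4 * (A ^ 6 / 6) := by
  have hC := C_nonneg hbound
  have hgint : IntegrableOn (fun r : ℝ => 16 * C / q ^ 4 * r ^ 5) (Set.Ioc 0 A) :=
    (continuous_const.mul (continuous_pow 5)).integrableOn_Ioc
  have hb : ∀ r ∈ Set.Ioc (0:ℝ) A,
      ‖k (1 + q / (2 * r ^ 2)) / ((r:ℂ) ^ 3)‖ ≤ 16 * C / q ^ 4 * r ^ 5 := by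
    intro r hr
    have hr0 : 0 < r := hr.1
    set t : ℝ := 1 + q / (2 * r ^ 2) with hts
    have ht0 : 0 < q / (2 * r ^ 2) := by positivity
    have ht1 : (1:ℝ) ≤ t := by rw [hts]; linarith
    have h1 : q / (2 * r ^ 2) ≤ t := by rw [hts]; linarith
    have h3 : q ^ 4 ≤ 16 * r ^ 8 * t ^ 4 := by
      have h2 := pow_le_pow_left₀ ht0.le h1 4
      have e : (q / (2 * r ^ 2)) ^ 4 = q ^ 4 / (16 * r ^ 8) := by
        field_simp
        ring
      rw [e, div_le_iff₀ (by positivity)] at h2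
      nlinarith [h2]
    have hnorm : ‖k t / ((r:ℂ) ^ 3)‖ = ‖k t‖ / r ^ 3 := by
      rw [norm_div, norm_pow, Complex.norm_real, Real.norm_of_nonneg hr0.le]
    rw [hnorm]
    have step1 : ‖k t‖ / r ^ 3 ≤ (C / t ^ 4) / r ^ 3 := by
      gcongr
      exact hbound t ht1
    refine le_trans step1 ?_
    rw [div_div, div_le_iff₀ (by positivity)]
    have e2 : 16 * C / q ^ 4 * r ^ 5 * (t ^ 4 * r ^ 3) = C * (16 * r ^ 8 * t ^ 4) / q ^ 4 := by
      field_simp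
    rw [e2, le_div_iff₀ (by positivity)]
    exact mul_le_mul_of_nonneg_left h3 hC
  refine le_trans (norm_integral_le_of_norm_le hgint
    ((ae_restrict_iff' measurableSet_Ioc).mpr (Filter.Eventually.of_forall hb))) ?_
  rw [← intervalIntegral.integral_of_le hA.le, intervalIntegral.integral_const_mul,
    integral_pow]
  norm_num

lemma part1 (τ : ℂ) (hτ : 0 < τ.im) (ψ : ℤ × ℤ → ℂ)
    (habs : ∀ a : ℤ × ℤ, ‖ψ a‖ = 1)
    (hk : ContinuousOn k (Set.Ici 1))
    (hbound : ∀ t : ℝ, 1 ≤ t → ‖k t‖ ≤ C / t ^ 4) {A : ℝ} (hA : 0 < A) :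
    Summable (fun mn : ℤ × ℤ =>
      ‖if mn = 0 then (0:ℂ) else
        ψ mn * ∫ r in Set.Ioc (0 : ℝ) A, k (1 + latQ τ mn / (2 * r ^ 2)) / ((r : ℂ) ^ 3)‖) := by
  have hmaj := (latQ_summable_inv_pow4 τ hτ).mul_left (16 * C * (A ^ 6 / 6))
  refine Summable.of_nonneg_of_le (fun mn => norm_nonneg _) (fun mn => ?_) hmaj
  by_cases hmn : mn = 0
  · rw [if_pos hmn, if_pos hmn, norm_zero, mul_zero]
  · rw [if_neg hmn, if_neg hmn]
    have hq := latQ_pos τ hτ hmn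
    rw [norm_mul, habs mn, one_mul]
    refine le_trans (norm_integral_bd hk hbound hq hA) (le_of_eq ?_)
    rw [div_eq_mul_inv]
    ring

end part1

noncomputable def latticeZlt (τ : ℂ) (ψ : ℤ × ℤ → ℂ) (x : ℝ) : ℂ :=
  ∑' mn : ℤ × ℤ, if mn ≠ 0 ∧ latQ τ mn < x then ψ mn / ((latQ τ mn : ℝ) : ℂ) else 0

section swap
variable {k : ℝ → ℂ} {C : ℝ}

lemma SA_eq (τ : ℂ) (hτ : 0 < τ.im) (ψ : ℤ × ℤ → ℂ)
    (habs : ∀ a : ℤ × ℤ, ‖ψ a‖ = 1)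
    (hk : ContinuousOn k (Set.Ici 1))
    (hbound : ∀ t : ℝ, 1 ≤ t → ‖k t‖ ≤ C / t ^ 4) {A : ℝ} (hA : 0 < A) :
    (∑' mn : ℤ × ℤ, if mn = 0 then (0:ℂ) else
        ψ mn * ∫ r in Set.Ioc (0 : ℝ) A, k (1 + latQ τ mn / (2 * r ^ 2)) / ((r : ℂ) ^ 3)) =
      ∫ x in Set.Ioi (0:ℝ), latticeZ τ ψ (2 * A ^ 2 * x) * k (1 + x) := by
  classical
  have hC := C_nonneg hbound
  set c2 : ℝ := (2 * A ^ 2)⁻¹ with hc2def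
  have hc2 : 0 < c2 := by rw [hc2def]; positivity
  set F : ℤ × ℤ → ℝ → ℂ := fun mn x => if mn = 0 then 0 else
    Set.indicator (Set.Ioi (latQ τ mn))
      (fun y => ψ mn / ((latQ τ mn : ℝ) : ℂ) * (((c2 : ℝ) : ℂ) * k (1 + c2 * y))) x with hFdef
  -- integrability of the inner function
  have hgA : IntegrableOn (fun x : ℝ => k (1 + c2 * x)) (Set.Ioi 0) := by
    have := (integrableOn_Ioi_comp_mul_left_iff (fun u : ℝ => k (1 + u)) 0 hc2).mpr
      (by rw [mul_zero]; exact k_shift_integrable hk hbound)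
    simpa using this
  have hFint : ∀ mn : ℤ × ℤ, Integrable (F mn) (volume.restrict (Set.Ioi 0)) := by
    intro mn
    rw [hFdef]
    by_cases hmn : mn = 0
    · simp only [if_pos hmn]
      exact integrable_zero _ _ _
    · simp only [if_neg hmn]
      apply Integrable.indicator _ measurableSet_Ioi
      exact (hgA.const_mul _).const_mul _
  -- norms of terms
  have hq : ∀ {mn : ℤ × ℤ}, mn ≠ 0 → 0 < latQ τ mn := fun hmn => latQ_pos τ hτ hmn
  -- each integral ∫ ‖F mn‖ is bounded
  have hFnorm : ∀ mn : ℤ × ℤ, mn ≠ 0 →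
      (∫ x in Set.Ioi (0:ℝ), ‖F mn x‖) ≤ (C * (c2 ^ 3)⁻¹ / 3) * (latQ τ mn ^ 4)⁻¹ := by
    intro mn hmn
    have hqp := hq hmn
    have e1 : (∫ x in Set.Ioi (0:ℝ), ‖F mn x‖) =
        ∫ x in Set.Ioi (latQ τ mn), ‖ψ mn / ((latQ τ mn : ℝ) : ℂ) * (((c2 : ℝ) : ℂ) * k (1 + c2 * x))‖ := by
      rw [hFdef]
      simp only [if_neg hmn]
      rw [show (fun x : ℝ => ‖Set.indicator (Set.Ioi (latQ τ mn))
          (fun y => ψ mn / ((latQ τ mn : ℝ) : ℂ) * (((c2 : ℝ) : ℂ) * k (1 + c2 * y))) x‖) =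
        Set.indicator (Set.Ioi (latQ τ mn))
          (fun y => ‖ψ mn / ((latQ τ mn : ℝ) : ℂ) * (((c2 : ℝ) : ℂ) * k (1 + c2 * y))‖) from
        funext fun x => norm_indicator_eq_indicator_norm _ x]
      rw [setIntegral_indicator measurableSet_Ioi, Set.Ioi_inter_Ioi, max_eq_right hqp.le]
    rw [e1]
    have hlhs : IntegrableOn (fun x : ℝ =>
        ‖ψ mn / ((latQ τ mn : ℝ) : ℂ) * (((c2 : ℝ) : ℂ) * k (1 + c2 * x))‖) (Set.Ioi (latQ τ mn)) :=
      (((hgA.mono_set (Set.Ioi_subset_Ioi hqp.le)).const_mul _).const_mul _).norm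
    have hrhs : IntegrableOn (fun x : ℝ =>
        (latQ τ mn)⁻¹ * c2 * (C * (c2 ^ 4)⁻¹) * x ^ (-4:ℝ)) (Set.Ioi (latQ τ mn)) :=
      (integrableOn_Ioi_rpow_of_lt (by norm_num) hqp).const_mul _
    have hmono := setIntegral_mono_on hlhs hrhs measurableSet_Ioi (fun x hx => ?_)
    · refine le_trans hmono (le_of_eq ?_)
      rw [MeasureTheory.integral_const_mul, integral_Ioi_rpow_of_lt (by norm_num) hqp]
      rw [show (-4:ℝ) + 1 = -3 by norm_num]
      rw [Real.rpow_neg hqp.le, show ((3:ℝ)) = ((3:ℕ):ℝ) by norm_num, Real.rpow_natCast]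
      field_simp
    · rw [Set.mem_Ioi] at hx
      have hx0 : 0 < x := lt_trans hqp hx
      rw [norm_mul, norm_mul, norm_Zterm τ hτ ψ habs hmn, Complex.norm_real,
        Real.norm_of_nonneg hc2.le]
      have h1c : 0 < c2 * x := by positivity
      have hb := hbound (1 + c2 * x) (by linarith)
      have h4 : (c2 * x) ^ 4 ≤ (1 + c2 * x) ^ 4 := pow_le_pow_left₀ h1c.le (by linarith) 4
      have hbb : ‖k (1 + c2 * x)‖ ≤ C * (c2 ^ 4)⁻¹ * x ^ (-4:ℝ) := by
        refine le_trans hb ?_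
        rw [Real.rpow_neg hx0.le, show ((4:ℝ)) = ((4:ℕ):ℝ) by norm_num, Real.rpow_natCast]
        have e2 : C * (c2 ^ 4)⁻¹ * ((x:ℝ) ^ (4:ℕ))⁻¹ = C / (c2 * x) ^ 4 := by
          rw [mul_pow, div_eq_mul_inv, mul_inv]
          ring
        rw [e2, div_le_div_iff₀ (by positivity) (by positivity)]
        nlinarith [mul_le_mul_of_nonneg_left h4 hC]
      calc (latQ τ mn)⁻¹ * (c2 * ‖k (1 + c2 * x)‖)
          ≤ (latQ τ mn)⁻¹ * (c2 * (C * (c2 ^ 4)⁻¹ * x ^ (-4:ℝ))) := by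
            have : (0:ℝ) ≤ (latQ τ mn)⁻¹ := by positivity
            gcongr
        _ = (latQ τ mn)⁻¹ * c2 * (C * (c2 ^ 4)⁻¹) * x ^ (-4:ℝ) := by ring
  -- summability of the integrals of norms
  have hFsum : Summable fun mn : ℤ × ℤ => ∫ x in Set.Ioi (0:ℝ), ‖F mn x‖ := by
    refine Summable.of_nonneg_of_le
      (fun mn => integral_nonneg fun x => norm_nonneg _) (fun mn => ?_)
      ((latQ_summable_inv_pow4 τ hτ).mul_left (C * (c2 ^ 3)⁻¹ / 3))
    by_cases hmn : mn = 0
    · simp only [hmn, hFdef, if_pos]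
      simp
    · rw [if_neg hmn]
      exact hFnorm mn hmn
  -- term identification
  have hterm : ∀ mn : ℤ × ℤ,
      (if mn = 0 then (0:ℂ) else
        ψ mn * ∫ r in Set.Ioc (0 : ℝ) A, k (1 + latQ τ mn / (2 * r ^ 2)) / ((r : ℂ) ^ 3)) =
      ∫ x in Set.Ioi (0:ℝ), F mn x := by
    intro mn
    by_cases hmn : mn = 0
    · rw [if_pos hmn, hFdef]
      simp [hmn]
    · rw [if_neg hmn, hFdef]
      simp only [if_neg hmn]
      have hqp := hq hmn
      rw [subst_eq hk hbound hqp hA]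
      have hscale := integral_comp_mul_left_Ioi (fun u : ℝ => k (1 + u)) (latQ τ mn) hc2
      have hpt : latQ τ mn / (2 * A ^ 2) = c2 * latQ τ mn := by
        rw [hc2def]
        field_simp
      have hscale' : (∫ x in Set.Ioi (latQ τ mn), k (1 + c2 * x)) =
          c2⁻¹ • ∫ x in Set.Ioi (c2 * latQ τ mn), k (1 + x) := hscale
      have hs2 : (∫ u in Set.Ioi (c2 * latQ τ mn), k (1 + u)) =
          c2 • ∫ y in Set.Ioi (latQ τ mn), k (1 + c2 * y) := by
        rw [hscale', smul_smul, mul_inv_cancel₀ hc2.ne', one_smul]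
      rw [setIntegral_indicator measurableSet_Ioi, Set.Ioi_inter_Ioi, max_eq_right hqp.le]
      rw [MeasureTheory.integral_const_mul, MeasureTheory.integral_const_mul]
      rw [hpt, hs2, Complex.real_smul]
      push_cast
      ring
  calc (∑' mn : ℤ × ℤ, if mn = 0 then (0:ℂ) else
        ψ mn * ∫ r in Set.Ioc (0 : ℝ) A, k (1 + latQ τ mn / (2 * r ^ 2)) / ((r : ℂ) ^ 3))
      = ∑' mn : ℤ × ℤ, ∫ x in Set.Ioi (0:ℝ), F mn x := tsum_congr hterm
    _ = ∫ x in Set.Ioi (0:ℝ), ∑' mn : ℤ × ℤ, F mn x :=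
        integral_tsum_of_summable_integral_norm hFint hFsum
    _ = ∫ x in Set.Ioi (0:ℝ), latticeZlt τ ψ x * (((c2 : ℝ) : ℂ) * k (1 + c2 * x)) := by
        refine setIntegral_congr_fun measurableSet_Ioi (fun x hx => ?_)
        unfold latticeZlt
        rw [← tsum_mul_right]
        refine tsum_congr fun mn => ?_
        rw [hFdef]
        by_cases hmn : mn = 0
        · simp [hmn]
        · simp only [if_neg hmn]
          rw [Set.indicator_apply]
          by_cases hlt : latQ τ mn < x
          · rw [if_pos (Set.mem_Ioi.mpr hlt), if_pos ⟨hmn, hlt⟩]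
          · rw [if_neg (fun h => hlt (Set.mem_Ioi.mp h)), if_neg (fun h => hlt h.2), zero_mul]
    _ = ∫ x in Set.Ioi (0:ℝ), latticeZ τ ψ x * (((c2 : ℝ) : ℂ) * k (1 + c2 * x)) := by
        have hD : volume (Set.range (latQ τ)) = 0 :=
          (Set.countable_range (latQ τ)).measure_zero _
        have hae : ∀ᵐ x : ℝ, x ∉ Set.range (latQ τ) := by
          rw [← MeasureTheory.measure_eq_zero_iff_ae_notMem] at *
          exact hD
        refine integral_congr_ae (ae_restrict_of_ae (hae.mono fun x hx => ?_))
        simp only [latticeZ_eq]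
        congr 1
        refine tsum_congr fun mn => ?_
        refine if_congr (and_congr_right fun hmn => ?_) rfl rfl
        constructor
        · exact le_of_lt
        · intro hle
          exact lt_of_le_of_ne hle (fun h => hx ⟨mn, h⟩)
    _ = ∫ x in Set.Ioi (0:ℝ), latticeZ τ ψ (2 * A ^ 2 * x) * k (1 + x) := by
        have hb : (0:ℝ) < 2 * A ^ 2 := by positivity
        have e3 : ∀ x : ℝ, c2 * (2 * A ^ 2 * x) = x := fun x => by
          rw [hc2def]; field_simp
        have hscale := integral_comp_mul_left_Ioi
          (fun x => latticeZ τ ψ x * (((c2 : ℝ) : ℂ) * k (1 + c2 * x))) 0 hb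
        rw [mul_zero] at hscale
        have hscale' : (2 * A ^ 2 : ℝ) • ∫ x in Set.Ioi (0:ℝ),
            (fun y => latticeZ τ ψ y * (((c2 : ℝ) : ℂ) * k (1 + c2 * y))) (2 * A ^ 2 * x) =
            ∫ x in Set.Ioi (0:ℝ), latticeZ τ ψ x * (((c2 : ℝ) : ℂ) * k (1 + c2 * x)) := by
          rw [hscale, smul_smul, mul_inv_cancel₀ hb.ne', one_smul]
        rw [← hscale']
        have e4 : (∫ x in Set.Ioi (0:ℝ),
            (fun y => latticeZ τ ψ y * (((c2 : ℝ) : ℂ) * k (1 + c2 * y))) (2 * A ^ 2 * x)) =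
            ((c2 : ℝ) : ℂ) * ∫ x in Set.Ioi (0:ℝ), latticeZ τ ψ (2 * A ^ 2 * x) * k (1 + x) := by
          rw [← MeasureTheory.integral_const_mul]
          refine setIntegral_congr_fun measurableSet_Ioi (fun x hx => ?_)
          simp only []
          rw [e3 x]
          ring
        rw [e4, Complex.real_smul, ← mul_assoc, ← Complex.ofReal_mul, hc2def,
          mul_inv_cancel₀ hb.ne', Complex.ofReal_one, one_mul]
end swap

section final
variable {k : ℝ → ℂ} {C : ℝ}

lemma part2 (τ : ℂ) (hτ : 0 < τ.im) (ψ : ℤ × ℤ → ℂ)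
    (habs : ∀ a : ℤ × ℤ, ‖ψ a‖ = 1)
    (hk : ContinuousOn k (Set.Ici 1))
    (hbound : ∀ t : ℝ, 1 ≤ t → ‖k t‖ ≤ C / t ^ 4) (L : ℂ)
    (hL : Filter.Tendsto (fun x : ℝ => latticeZ τ ψ x) Filter.atTop (nhds L)) :
    Filter.Tendsto (fun A : ℝ => ∫ x in Set.Ioi (0:ℝ), latticeZ τ ψ (2 * A ^ 2 * x) * k (1 + x))
      Filter.atTop (nhds (L * ∫ u in Set.Ioi (0:ℝ), k (1 + u))) := by
  obtain ⟨B, hB⟩ := Z_bdd τ hτ ψ habs hL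
  have hkm : AEStronglyMeasurable (fun u : ℝ => k (1 + u)) (volume.restrict (Set.Ioi 0)) :=
    ((k_cont_shift hk).mono (Set.Ioi_subset_Ici le_rfl)).aestronglyMeasurable measurableSet_Ioi
  have hDCT := tendsto_integral_filter_of_dominated_convergence
    (l := (Filter.atTop : Filter ℝ)) (μ := volume.restrict (Set.Ioi (0:ℝ)))
    (F := fun (A : ℝ) (x : ℝ) => latticeZ τ ψ (2 * A ^ 2 * x) * k (1 + x))
    (f := fun x => L * k (1 + x)) (bound := fun x => B * ‖k (1 + x)‖)
    (Filter.Eventually.of_forall fun A =>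
      (((Z_meas τ hτ ψ).comp (measurable_const_mul (2 * A ^ 2))).aestronglyMeasurable.mul hkm))
    (Filter.Eventually.of_forall fun A => Filter.Eventually.of_forall fun x => by
      rw [norm_mul]
      exact mul_le_mul_of_nonneg_right (hB _) (norm_nonneg _))
    ((k_shift_integrable hk hbound).norm.const_mul B)
    ?_
  · rw [MeasureTheory.integral_const_mul] at hDCT
    exact hDCT
  · refine (ae_restrict_iff' measurableSet_Ioi).mpr (Filter.Eventually.of_forall fun x hx => ?_)
    rw [Set.mem_Ioi] at hx
    have h1 : Filter.Tendsto (fun A : ℝ => 2 * A ^ 2 * x) Filter.atTop Filter.atTop := by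
      apply Filter.Tendsto.atTop_mul_const hx
      exact (tendsto_pow_atTop two_ne_zero).const_mul_atTop two_pos
    exact (hL.comp h1).mul_const _

end final

end Aux

/-- for a nontrivial unitary character `ψ` of the lattice
`Λ = ℤ ⊕ ℤτ` (`Im τ > 0`) and a continuous `k` on `[1,∞)` with
`|k(t)| ≤ C t^{-4}`: for each `A > 0` the sum
`∑_{0 ≠ μ ∈ Λ} ψ(μ) ∫₀^A k(1+|μ|²/(2r²)) r^{-3} dr` converges absolutely, and
as `A → ∞` it tends to `L(Λ,ψ) ∫₀^∞ k(1+u) du`, where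
`L(Λ,ψ) = lim_{x→∞} Z(x,Λ,ψ)`. -/
theorem parabolic_sum_limit (τ : ℂ) (hτ : 0 < τ.im) (ψ : ℤ × ℤ → ℂ)
    (hadd : ∀ a b : ℤ × ℤ, ψ (a + b) = ψ a * ψ b)
    (habs : ∀ a : ℤ × ℤ, ‖ψ a‖ = 1)
    (hnt : ∃ a : ℤ × ℤ, ψ a ≠ 1)
    (k : ℝ → ℂ) (C : ℝ) (hk : ContinuousOn k (Set.Ici 1))
    (hbound : ∀ t : ℝ, 1 ≤ t → ‖k t‖ ≤ C / t ^ 4) :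
    (∀ A : ℝ, 0 < A → Summable (fun mn : ℤ × ℤ =>
      ‖if mn = 0 then 0 else
        ψ mn * ∫ r in Set.Ioc (0 : ℝ) A,
          k (1 + ‖(mn.1 : ℂ) * τ + (mn.2 : ℂ)‖ ^ 2 / (2 * r ^ 2)) /
            ((r : ℂ) ^ 3)‖)) ∧
    ∀ L : ℂ, Filter.Tendsto (fun x : ℝ => latticeZ τ ψ x) Filter.atTop (nhds L) →
      Filter.Tendsto
        (fun A : ℝ => ∑' mn : ℤ × ℤ,
          if mn = 0 then 0 else
            ψ mn * ∫ r in Set.Ioc (0 : ℝ) A,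
              k (1 + ‖(mn.1 : ℂ) * τ + (mn.2 : ℂ)‖ ^ 2 / (2 * r ^ 2)) /
                ((r : ℂ) ^ 3))
        Filter.atTop (nhds (L * ∫ u in Set.Ioi (0 : ℝ), k (1 + u))) := by
  classical
  constructor
  · intro A hA
    exact part1 τ hτ ψ habs hk hbound hA
  · intro L hL
    refine Filter.Tendsto.congr' ?_ (part2 τ hτ ψ habs hk hbound L hL)
    filter_upwards [Filter.eventually_gt_atTop 0] with A hA
    exact (SA_eq τ hτ ψ habs hk hbound hA).symm
end

section
/- Let H be a complex Hilbert space and A a self-adjoint operator on H with domain D_A ⊆ H. Let v be an eigenpacket of A, and let f ∈ D_A be an eigenvector of A, i.e. A f = c f for some real number c. Then ⟨f, v_λ⟩ = 0 for all λ ∈ ℝ. -/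
open MeasureTheory intervalIntegral

/-- An *eigenpacket* of a (possibly unbounded) operator `A` on a complex
Hilbert space `H`: a map `v : ℝ → H` with `v 0 = 0`, `v λ ∈ D_A` for all `λ`,
`v` norm-continuous, and `A v_λ = λ v_λ - ∫₀^λ v_μ dμ`. -/
def IsEigenpacket {H : Type*} [NormedAddCommGroup H] [InnerProductSpace ℂ H]
    [CompleteSpace H] (A : H →ₗ.[ℂ] H) (v : ℝ → H) : Prop :=
  v 0 = 0 ∧ (∀ lam : ℝ, v lam ∈ A.domain) ∧ Continuous v ∧
    ∀ (lam : ℝ) (h : v lam ∈ A.domain),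
      A ⟨v lam, h⟩ = (lam : ℂ) • v lam - ∫ μ in (0 : ℝ)..lam, v μ

/-- if `A` is a self-adjoint (densely defined) operator on a
complex Hilbert space, `v` is an eigenpacket of `A`, and `f ∈ D_A` is an
eigenvector of `A` (with real eigenvalue `c`), then `⟨f, v_λ⟩ = 0` for all
`λ ∈ ℝ`. -/
theorem eigenvector_orthogonal_eigenpacket {H : Type*} [NormedAddCommGroup H]
    [InnerProductSpace ℂ H] [CompleteSpace H]
    (A : H →ₗ.[ℂ] H) (hdense : Dense (A.domain : Set H))
    (hsa : A.adjoint = A)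
    (v : ℝ → H) (hv : IsEigenpacket A v)
    (f : H) (hf : f ∈ A.domain) (c : ℝ)
    (hAf : A ⟨f, hf⟩ = (c : ℂ) • f) :
    ∀ lam : ℝ, (inner ℂ f (v lam) : ℂ) = 0 := by
  obtain ⟨hv0, hdom, hcont, heq⟩ := hv
  set g : ℝ → ℂ := fun lam => (inner ℂ f (v lam) : ℂ) with hgdef
  have hgc : Continuous g := (innerSL ℂ f).continuous.comp hcont
  have hform : A.IsFormalAdjoint A := by
    have h := LinearPMap.adjoint_isFormalAdjoint hdense (T := A)
    rwa [hsa] at h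
  -- the key integral identity
  have key : ∀ lam : ℝ, ((lam : ℂ) - c) * g lam = ∫ μ in (0:ℝ)..lam, g μ := by
    intro lam
    have h1 := hform ⟨f, hf⟩ ⟨v lam, hdom lam⟩
    rw [hAf, heq lam (hdom lam)] at h1
    have h2 : (inner ℂ ((c : ℂ) • f) (v lam) : ℂ) = (c : ℂ) * g lam := by
      rw [inner_smul_left, Complex.conj_ofReal]
    have h3 : (inner ℂ f ((lam : ℂ) • v lam - ∫ μ in (0:ℝ)..lam, v μ) : ℂ)
        = (lam : ℂ) * g lam - ∫ μ in (0:ℝ)..lam, g μ := by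
      rw [inner_sub_right, inner_smul_right]
      congr 1
      exact ((innerSL ℂ f).intervalIntegral_comp_comm
        (hcont.intervalIntegrable _ _)).symm
    rw [h2, h3] at h1
    ring_nf
    ring_nf at h1
    linear_combination -h1
  set G : ℝ → ℂ := fun lam => ∫ μ in (0:ℝ)..lam, g μ with hGdef
  have hG : ∀ b : ℝ, HasDerivAt G (g b) b := fun b =>
    (hgc.integral_hasStrictDerivAt 0 b).hasDerivAt
  -- derivative of g is 0 away from c
  have hderiv : ∀ x : ℝ, x ≠ c → HasDerivAt g 0 x := by
    intro x hx
    have hne : ((x : ℂ) - c) ≠ 0 := by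
      rw [sub_ne_zero]
      exact_mod_cast hx
    have hden : HasDerivAt (fun t : ℝ => ((t : ℂ) - c)) 1 x := by
      simpa using (Complex.ofRealCLM.hasDerivAt (x := x)).sub_const (c : ℂ)
    have hq : HasDerivAt (fun t : ℝ => G t / ((t : ℂ) - c))
        ((g x * ((x:ℂ) - c) - G x * 1) / ((x:ℂ) - c) ^ 2) x := (hG x).div hden hne
    have hzero : (g x * ((x:ℂ) - c) - G x * 1) / ((x:ℂ) - c) ^ 2 = 0 := by
      rw [mul_one, mul_comm, key x]
      simp [hGdef]
    rw [hzero] at hq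
    refine hq.congr_of_eventuallyEq ?_
    have hopen : {t : ℝ | t ≠ c} ∈ nhds x := isOpen_ne.mem_nhds hx
    filter_upwards [hopen] with t ht
    have hne' : ((t : ℂ) - c) ≠ 0 := by
      rw [sub_ne_zero]; exact_mod_cast ht
    rw [eq_div_iff hne', mul_comm, key t]
  -- g is constant on each side of c
  have hconstIoi : ∀ x ∈ Set.Ioi c, ∀ y ∈ Set.Ioi c, g x = g y := by
    intro x hx y hy
    refine (convex_Ioi c).is_const_of_fderivWithin_eq_zero
      (fun z hz => ((hderiv z (ne_of_gt hz)).differentiableAt.differentiableWithinAt)) ?_ hx hy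
    intro z hz
    rw [fderivWithin_of_isOpen isOpen_Ioi hz]
    have := (hderiv z (ne_of_gt hz)).hasFDerivAt.fderiv
    rw [this]
    ext
    simp
  have hconstIio : ∀ x ∈ Set.Iio c, ∀ y ∈ Set.Iio c, g x = g y := by
    intro x hx y hy
    refine (convex_Iio c).is_const_of_fderivWithin_eq_zero
      (fun z hz => ((hderiv z (ne_of_lt hz)).differentiableAt.differentiableWithinAt)) ?_ hx hy
    intro z hz
    rw [fderivWithin_of_isOpen isOpen_Iio hz]
    have := (hderiv z (ne_of_lt hz)).hasFDerivAt.fderiv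
    rw [this]
    ext
    simp
  -- extend to closed half-lines by continuity
  have hIci : ∀ x ∈ Set.Ici c, g x = g (c + 1) := by
    have hcl : IsClosed {x : ℝ | g x = g (c + 1)} := isClosed_eq hgc continuous_const
    have hsub : Set.Ioi c ⊆ {x : ℝ | g x = g (c + 1)} := fun x hx =>
      hconstIoi x hx (c + 1) (by simp)
    intro x hx
    have := hcl.closure_subset_iff.mpr hsub
    rw [closure_Ioi] at this
    exact this hx
  have hIic : ∀ x ∈ Set.Iic c, g x = g (c - 1) := by
    have hcl : IsClosed {x : ℝ | g x = g (c - 1)} := isClosed_eq hgc continuous_const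
    have hsub : Set.Iio c ⊆ {x : ℝ | g x = g (c - 1)} := fun x hx =>
      hconstIio x hx (c - 1) (by simp)
    intro x hx
    have := hcl.closure_subset_iff.mpr hsub
    rw [closure_Iio] at this
    exact this hx
  -- hence g is globally constant
  have hconst : ∀ x : ℝ, g x = g c := by
    intro x
    rcases le_total x c with h | h
    · rw [hIic x h, ← hIic c (Set.mem_Iic.mpr le_rfl)]
    · rw [hIci x h, ← hIci c (Set.mem_Ici.mpr le_rfl)]
  have h0 : g 0 = 0 := by simp [hgdef, hv0]
  intro lam
  show g lam = 0
  rw [hconst lam, ← hconst 0, h0]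
end

section
/- Let H be a complex Hilbert space, A a self-adjoint operator on H with domain D_A ⊆ H, and v an eigenpacket of A. Then there exists a non-decreasing, right-continuous function F : ℝ → ℝ, unique up to an additive constant, such that F(β) − F(α) = ‖v_β − v_α‖² for all real α ≤ β. -/
open MeasureTheory intervalIntegral

section Aux
variable {H : Type*} [NormedAddCommGroup H] [InnerProductSpace ℂ H] [CompleteSpace H]

local notation "⟪" x ", " y "⟫" => @inner ℂ _ _ x y

lemma inner_intervalIntegral_right (w : H) {f : ℝ → H} (hf : Continuous f) (a b : ℝ) :
    ⟪w, ∫ t in a..b, f t⟫ = ∫ t in a..b, ⟪w, f t⟫ := by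
  rw [show (inner ℂ w (∫ t in a..b, f t) : ℂ) = innerSL ℂ w (∫ t in a..b, f t) from rfl,
    ← ContinuousLinearMap.intervalIntegral_comp_comm (innerSL ℂ w)
      (hf.intervalIntegrable a b (μ := volume))]
  rfl

lemma intervalIntegral_conj {g : ℝ → ℂ} (hg : Continuous g) (a b : ℝ) :
    (∫ t in a..b, (starRingEnd ℂ) (g t)) = (starRingEnd ℂ) (∫ t in a..b, g t) := by
  have := ContinuousLinearMap.intervalIntegral_comp_comm (𝕜 := ℝ)
      (RCLike.conjCLE (K := ℂ)).toContinuousLinearMap (hg.intervalIntegrable a b (μ := volume))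
  simpa [RCLike.conjCLE_apply] using this

lemma inner_intervalIntegral_left {f : ℝ → H} (hf : Continuous f) (a b : ℝ) (w : H) :
    ⟪∫ t in a..b, f t, w⟫ = ∫ t in a..b, ⟪f t, w⟫ := by
  rw [← inner_conj_symm, inner_intervalIntegral_right w hf,
    ← intervalIntegral_conj (Continuous.inner continuous_const hf)]
  simp_rw [inner_conj_symm]

end Aux

section Aux2
variable {H : Type*} [NormedAddCommGroup H] [InnerProductSpace ℂ H] [CompleteSpace H]

local notation "⟪" x ", " y "⟫" => @inner ℂ _ _ x y

lemma eig_apply_sub (A : H →ₗ.[ℂ] H) {v : ℝ → H}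
    (hdom : ∀ lam : ℝ, v lam ∈ A.domain) (hcont : Continuous v)
    (heq : ∀ (lam : ℝ) (h : v lam ∈ A.domain),
      A ⟨v lam, h⟩ = (lam : ℂ) • v lam - ∫ μ in (0 : ℝ)..lam, v μ)
    (a b : ℝ) :
    A ⟨v b - v a, sub_mem (hdom b) (hdom a)⟩
      = (a : ℂ) • (v b - v a) + ∫ t in a..b, (v b - v t) := by
  have h1 : (⟨v b - v a, sub_mem (hdom b) (hdom a)⟩ : A.domain)
      = ⟨v b, hdom b⟩ - ⟨v a, hdom a⟩ := rfl
  rw [h1, A.map_sub, heq b, heq a]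
  have hInt : (∫ t in a..b, (v b - v t)) = (b - a) • v b - ∫ t in a..b, v t := by
    rw [intervalIntegral.integral_sub (intervalIntegrable_const) (hcont.intervalIntegrable a b),
      intervalIntegral.integral_const]
  have hadd : (∫ t in (0:ℝ)..b, v t) = (∫ t in (0:ℝ)..a, v t) + ∫ t in a..b, v t :=
    (intervalIntegral.integral_add_adjacent_intervals
      (hcont.intervalIntegrable 0 a) (hcont.intervalIntegrable a b)).symm
  rw [hInt, hadd]
  have hs : (b - a) • v b = ((b : ℂ) - (a : ℂ)) • v b := by
    rw [sub_smul, sub_smul]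
    norm_cast
  rw [hs]
  module

end Aux2

section Aux3
variable {H : Type*} [NormedAddCommGroup H] [InnerProductSpace ℂ H] [CompleteSpace H]

local notation "⟪" x ", " y "⟫" => @inner ℂ _ _ x y

lemma eig_funEq (A : H →ₗ.[ℂ] H) {v : ℝ → H}
    (hsym : ∀ x y : A.domain, ⟪(A x : H), (y : H)⟫ = ⟪(x : H), (A y : H)⟫)
    (hdom : ∀ lam : ℝ, v lam ∈ A.domain) (hcont : Continuous v)
    (heq : ∀ (lam : ℝ) (h : v lam ∈ A.domain),
      A ⟨v lam, h⟩ = (lam : ℂ) • v lam - ∫ μ in (0 : ℝ)..lam, v μ)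
    (b d a c : ℝ) :
    ((c : ℂ) - (a : ℂ)) * ⟪v b - v a, v d - v c⟫
      = (∫ t in a..b, ⟪v b - v t, v d - v c⟫) - ∫ s in c..d, ⟪v b - v a, v d - v s⟫ := by
  have h := hsym ⟨v b - v a, sub_mem (hdom b) (hdom a)⟩
    ⟨v d - v c, sub_mem (hdom d) (hdom c)⟩
  rw [eig_apply_sub A hdom hcont heq a b, eig_apply_sub A hdom hcont heq c d] at h
  rw [inner_add_left, inner_smul_left, inner_add_right, inner_smul_right,
    inner_intervalIntegral_left (f := fun t => v b - v t)
      (continuous_const.sub hcont) a b,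
    inner_intervalIntegral_right _ (f := fun s => v d - v s)
      (continuous_const.sub hcont) c d, Complex.conj_ofReal] at h
  linear_combination -h

end Aux3

section Aux4
variable {H : Type*} [NormedAddCommGroup H] [InnerProductSpace ℂ H] [CompleteSpace H]

local notation "⟪" x ", " y "⟫" => @inner ℂ _ _ x y

lemma integral_shift_pow (p q e : ℝ) (n : ℕ) :
    (∫ t in p..q, ((q - t) + e) ^ n) = ((q - p + e) ^ (n + 1) - e ^ (n + 1)) / (n + 1) := by
  have h1 : (∫ t in p..q, ((q - t) + e) ^ n) = ∫ t in p..q, (fun u => (u + e) ^ n) (q - t) := rfl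
  rw [h1, intervalIntegral.integral_comp_sub_left (fun u => (u + e) ^ n) q]
  have h2 : (∫ u in q - q..q - p, (u + e) ^ n) = ∫ u in (q-q) + e..(q-p) + e, u ^ n :=
    intervalIntegral.integral_comp_add_right (fun u => u ^ n) e
  rw [h2, integral_pow]
  ring_nf

lemma eig_ortho_strict (A : H →ₗ.[ℂ] H) {v : ℝ → H}
    (hsym : ∀ x y : A.domain, ⟪(A x : H), (y : H)⟫ = ⟪(x : H), (A y : H)⟫)
    (hdom : ∀ lam : ℝ, v lam ∈ A.domain) (hcont : Continuous v)
    (heq : ∀ (lam : ℝ) (h : v lam ∈ A.domain),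
      A ⟨v lam, h⟩ = (lam : ℂ) • v lam - ∫ μ in (0 : ℝ)..lam, v μ)
    {a b c d : ℝ} (hab : a ≤ b) (hbc : b < c) (hcd : c ≤ d) :
    ⟪v b - v a, v d - v c⟫ = 0 := by
  set g : ℝ := c - b with hgdef
  have hg0 : 0 < g := by simp only [hgdef]; linarith
  set G : ℝ → ℝ → ℂ := fun x y => ⟪v b - v x, v d - v y⟫ with hGdef
  have hfe : ∀ x y : ℝ, ((y : ℂ) - (x : ℂ)) * G x y
      = (∫ t in x..b, G t y) - ∫ s in y..d, G x s := fun x y =>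
    eig_funEq A hsym hdom hcont heq b d x y
  have hGcont : Continuous (fun p : ℝ × ℝ => G p.1 p.2) := by
    apply Continuous.inner
    · exact (continuous_const.sub (hcont.comp continuous_fst))
    · exact (continuous_const.sub (hcont.comp continuous_snd))
  have hGc1 : ∀ y, Continuous fun x => G x y := by
    intro y; exact hGcont.comp (continuous_id.prodMk continuous_const)
  have hGc2 : ∀ x, Continuous fun y => G x y := by
    intro x; exact hGcont.comp (continuous_const.prodMk continuous_id)
  obtain ⟨M0, hM0⟩ := ((isCompact_Icc (a := a) (b := b)).prod
    (isCompact_Icc (a := c) (b := d))).exists_bound_of_continuousOn hGcont.continuousOn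
  set M : ℝ := max M0 0 with hMdef
  have hMnn : 0 ≤ M := le_max_right _ _
  have hM : ∀ x ∈ Set.Icc a b, ∀ y ∈ Set.Icc c d, ‖G x y‖ ≤ M := by
    intro x hx y hy
    calc ‖G x y‖ ≤ M0 := hM0 (x, y) (Set.mk_mem_prod hx hy)
    _ ≤ M := le_max_left _ _
  set K : ℝ := 2 / g with hKdef
  have hK0 : 0 < K := by positivity
  have key : ∀ n : ℕ, ∀ x ∈ Set.Icc a b, ∀ y ∈ Set.Icc c d,
      ‖G x y‖ ≤ M * (K * ((b - x) + (d - y))) ^ n / n.factorial := by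
    intro n
    induction n with
    | zero => simpa using fun x hx y hy => hM x hx y hy
    | succ n ih =>
      intro x hx y hy
      obtain ⟨hax, hxb⟩ := hx
      obtain ⟨hcy, hyd⟩ := hy
      have hyx : g ≤ y - x := by simp only [hgdef]; linarith
      have hyx0 : (0 : ℝ) < y - x := lt_of_lt_of_le hg0 hyx
      set P : ℝ := (b - x) + (d - y) with hPdef
      have hP0 : 0 ≤ P := by simp only [hPdef]; linarith
      set C : ℝ := M * K ^ n / n.factorial with hCdef
      have hC0 : 0 ≤ C := by positivity
      have hA1 : (0:ℝ) ≤ (d - y) ^ (n+1) := by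
        have : (0:ℝ) ≤ d - y := by linarith
        positivity
      have hA2 : (0:ℝ) ≤ (b - x) ^ (n+1) := by
        have : (0:ℝ) ≤ b - x := by linarith
        positivity
      have hn1 : (0:ℝ) < ((n:ℝ) + 1) := by positivity
      -- bound the first integral
      have hI1 : ‖∫ t in x..b, G t y‖ ≤ C * ((P ^ (n+1) - (d - y) ^ (n+1)) / ((n:ℝ)+1)) := by
        calc ‖∫ t in x..b, G t y‖ ≤ ∫ t in x..b, ‖G t y‖ :=
              intervalIntegral.norm_integral_le_integral_norm hxb
        _ ≤ ∫ t in x..b, C * ((b - t) + (d - y)) ^ n := by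
              apply intervalIntegral.integral_mono_on hxb
              · exact ((hGc1 y).norm).intervalIntegrable _ _
              · exact (Continuous.intervalIntegrable (by fun_prop) _ _)
              · intro t ht
                have h1 := ih t ⟨le_trans hax ht.1, ht.2⟩ y ⟨hcy, hyd⟩
                calc ‖G t y‖ ≤ M * (K * ((b - t) + (d - y))) ^ n / n.factorial := h1
                _ = C * ((b - t) + (d - y)) ^ n := by
                      simp only [hCdef]; rw [mul_pow]; ring
        _ = C * ((P ^ (n+1) - (d - y) ^ (n+1)) / ((n:ℝ)+1)) := by
              rw [intervalIntegral.integral_const_mul, integral_shift_pow]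
              try push_cast
              try ring
      -- bound the second integral
      have hI2 : ‖∫ s in y..d, G x s‖ ≤ C * ((P ^ (n+1) - (b - x) ^ (n+1)) / ((n:ℝ)+1)) := by
        calc ‖∫ s in y..d, G x s‖ ≤ ∫ s in y..d, ‖G x s‖ :=
              intervalIntegral.norm_integral_le_integral_norm hyd
        _ ≤ ∫ s in y..d, C * ((d - s) + (b - x)) ^ n := by
              apply intervalIntegral.integral_mono_on hyd
              · exact ((hGc2 x).norm).intervalIntegrable _ _
              · exact (Continuous.intervalIntegrable (by fun_prop) _ _)
              · intro s hs
                have h1 := ih x ⟨hax, hxb⟩ s ⟨le_trans hcy hs.1, hs.2⟩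
                calc ‖G x s‖ ≤ M * (K * ((b - x) + (d - s))) ^ n / n.factorial := h1
                _ = C * ((d - s) + (b - x)) ^ n := by
                      simp only [hCdef]; rw [mul_pow]; ring_nf
        _ = C * ((P ^ (n+1) - (b - x) ^ (n+1)) / ((n:ℝ)+1)) := by
              rw [intervalIntegral.integral_const_mul, integral_shift_pow]
              try push_cast
              try ring
      -- combine
      have hnorm : (y - x) * ‖G x y‖ = ‖(∫ t in x..b, G t y) - ∫ s in y..d, G x s‖ := by
        rw [← hfe x y, norm_mul,
          show ((y : ℂ) - (x : ℂ)) = ((y - x : ℝ) : ℂ) by push_cast; ring,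
          Complex.norm_real, Real.norm_of_nonneg hyx0.le]
      have hsum : (y - x) * ‖G x y‖ ≤ C * (2 * P ^ (n+1) / ((n:ℝ)+1)) := by
        rw [hnorm]
        calc ‖(∫ t in x..b, G t y) - ∫ s in y..d, G x s‖
            ≤ ‖∫ t in x..b, G t y‖ + ‖∫ s in y..d, G x s‖ := norm_sub_le _ _
        _ ≤ C * ((P ^ (n+1) - (d - y) ^ (n+1)) / ((n:ℝ)+1))
              + C * ((P ^ (n+1) - (b - x) ^ (n+1)) / ((n:ℝ)+1)) := add_le_add hI1 hI2
        _ ≤ C * (P ^ (n+1) / ((n:ℝ)+1)) + C * (P ^ (n+1) / ((n:ℝ)+1)) := by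
              gcongr <;> linarith
        _ = C * (2 * P ^ (n+1) / ((n:ℝ)+1)) := by ring
      have hgne : g ≠ 0 := ne_of_gt hg0
      have hfacne : (n.factorial : ℝ) ≠ 0 := Nat.cast_ne_zero.mpr n.factorial_ne_zero
      have h2 : ‖G x y‖ ≤ C * (2 * P ^ (n+1) / ((n:ℝ)+1)) / g := by
        rw [le_div_iff₀ hg0]
        have hmul : ‖G x y‖ * g ≤ ‖G x y‖ * (y - x) :=
          mul_le_mul_of_nonneg_left hyx (norm_nonneg _)
        calc ‖G x y‖ * g ≤ ‖G x y‖ * (y - x) := hmul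
        _ = (y - x) * ‖G x y‖ := by ring
        _ ≤ _ := hsum
      have heq2 : C * (2 * P ^ (n+1) / ((n:ℝ)+1)) / g
          = M * (K * P) ^ (n+1) / (n+1).factorial := by
        rw [hCdef, Nat.factorial_succ, mul_pow, hKdef, div_pow]
        push_cast
        field_simp
        ring_nf
        simp only [inv_pow, mul_assoc, mul_inv_cancel₀ hgne, mul_inv_cancel₀ (pow_ne_zero n hgne), mul_one,
          mul_left_comm _ g⁻¹]
      rw [← heq2]
      exact h2
  -- take the limit
  have hlim : Filter.Tendsto (fun n : ℕ => M * (K * ((b - a) + (d - c))) ^ n / n.factorial)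
      Filter.atTop (nhds 0) := by
    have h := FloorSemiring.tendsto_pow_div_factorial_atTop (K := ℝ) (K * ((b - a) + (d - c)))
    have h2 := h.const_mul M
    simpa [mul_div_assoc, mul_zero] using h2
  have hle : ‖G a c‖ ≤ 0 := ge_of_tendsto' hlim fun n =>
    key n a ⟨le_refl a, hab⟩ c ⟨le_refl c, hcd⟩
  have : G a c = 0 := norm_le_zero_iff.mp hle
  exact this

end Aux4

section Aux6
variable {H : Type*} [NormedAddCommGroup H] [InnerProductSpace ℂ H] [CompleteSpace H]

local notation "⟪" x ", " y "⟫" => @inner ℂ _ _ x y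

lemma eig_ortho (A : H →ₗ.[ℂ] H) {v : ℝ → H}
    (hsym : ∀ x y : A.domain, ⟪(A x : H), (y : H)⟫ = ⟪(x : H), (A y : H)⟫)
    (hdom : ∀ lam : ℝ, v lam ∈ A.domain) (hcont : Continuous v)
    (heq : ∀ (lam : ℝ) (h : v lam ∈ A.domain),
      A ⟨v lam, h⟩ = (lam : ℂ) • v lam - ∫ μ in (0 : ℝ)..lam, v μ)
    {a b c d : ℝ} (hab : a ≤ b) (hbc : b ≤ c) (hcd : c ≤ d) :
    ⟪v b - v a, v d - v c⟫ = 0 := by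
  rcases lt_or_eq_of_le hbc with hlt | hbceq
  · exact eig_ortho_strict A hsym hdom hcont heq hab hlt hcd
  · rcases lt_or_eq_of_le hcd with hcdlt | hcdeq
    · have hzero : Set.EqOn (fun y => ⟪v b - v a, v d - v y⟫) 0 (Set.Ioc c d) := by
        intro y hy
        exact eig_ortho_strict A hsym hdom hcont heq hab (hbceq ▸ hy.1) hy.2
      have hcontf : Continuous fun y => ⟪v b - v a, v d - v y⟫ :=
        Continuous.inner continuous_const (continuous_const.sub hcont)
      have hcl := hzero.closure hcontf continuous_const
      have hmem : c ∈ closure (Set.Ioc c d) := by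
        rw [closure_Ioc (ne_of_lt hcdlt)]
        exact ⟨le_refl c, hcdlt.le⟩
      exact hcl hmem
    · rw [← hcdeq, sub_self, inner_zero_right]

end Aux6

/-- for an eigenpacket `v` of a self-adjoint (densely defined)
operator `A` on a complex Hilbert space there is a non-decreasing,
right-continuous `F : ℝ → ℝ`, unique up to an additive constant, with
`F(β) - F(α) = ‖v_β - v_α‖²` for all `α ≤ β`. -/
theorem eigenpacket_spectral_function {H : Type*} [NormedAddCommGroup H]
    [InnerProductSpace ℂ H] [CompleteSpace H]
    (A : H →ₗ.[ℂ] H) (hdense : Dense (A.domain : Set H))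
    (hsa : A.adjoint = A)
    (v : ℝ → H) (hv : IsEigenpacket A v) :
    ∃ F : ℝ → ℝ,
      (Monotone F ∧ (∀ a : ℝ, ContinuousWithinAt F (Set.Ici a) a) ∧
        ∀ α β : ℝ, α ≤ β → F β - F α = ‖v β - v α‖ ^ 2) ∧
      ∀ G : ℝ → ℝ,
        (Monotone G ∧ (∀ a : ℝ, ContinuousWithinAt G (Set.Ici a) a) ∧
          ∀ α β : ℝ, α ≤ β → G β - G α = ‖v β - v α‖ ^ 2) →
        ∃ c : ℝ, ∀ x : ℝ, G x = F x + c := by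

  obtain ⟨hv0, hdom, hcont, heq⟩ := hv
  have hsym : ∀ x y : A.domain,
      (inner ℂ (A x : H) (y : H) : ℂ) = (inner ℂ (x : H) (A y : H) : ℂ) := by
    have h := LinearPMap.adjoint_isFormalAdjoint (T := A) hdense
    rw [hsa] at h
    exact h
  have horth : ∀ a b c d : ℝ, a ≤ b → b ≤ c → c ≤ d →
      (inner ℂ (v b - v a) (v d - v c) : ℂ) = 0 :=
    fun a b c d hab hbc hcd => eig_ortho A hsym hdom hcont heq hab hbc hcd
  set F : ℝ → ℝ := fun lam => ‖v (max lam 0)‖ ^ 2 - ‖v (min lam 0)‖ ^ 2 with hF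
  have hincr : ∀ α β : ℝ, α ≤ β → F β - F α = ‖v β - v α‖ ^ 2 := by
    intro α β hab
    rcases le_total 0 α with h0a | ha0
    · have h0b : (0 : ℝ) ≤ β := le_trans h0a hab
      have h := horth 0 α α β h0a (le_refl α) hab
      rw [hv0, sub_zero, inner_sub_right] at h
      have h' : (inner ℂ (v α) (v β) : ℂ) = inner ℂ (v α) (v α) := by
        rwa [sub_eq_zero] at h
      have hr : RCLike.re (inner ℂ (v α) (v β) : ℂ) = ‖v α‖ ^ 2 := by
        rw [h', inner_self_eq_norm_sq]
      have hns := norm_sub_sq (𝕜 := ℂ) (v β) (v α)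
      have hsym2 : RCLike.re (inner ℂ (v β) (v α) : ℂ)
          = RCLike.re (inner ℂ (v α) (v β) : ℂ) := inner_re_symm _ _
      simp only [hF, max_eq_left h0a, max_eq_left h0b, min_eq_right h0a,
        min_eq_right h0b, hv0, norm_zero]
      rw [hns, hsym2, hr]
      ring
    · rcases le_total β 0 with hb0 | h0b
      · have h := horth α β β 0 hab (le_refl β) hb0
        rw [hv0, zero_sub, inner_neg_right, neg_eq_zero, inner_sub_left,
          sub_eq_zero] at h
        -- h : ⟪vβ, vβ⟫ = ⟪vα, vβ⟫
        have hr : RCLike.re (inner ℂ (v α) (v β) : ℂ) = ‖v β‖ ^ 2 := by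
          rw [← h, inner_self_eq_norm_sq]
        have hns := norm_sub_sq (𝕜 := ℂ) (v β) (v α)
        have hsym2 : RCLike.re (inner ℂ (v β) (v α) : ℂ)
            = RCLike.re (inner ℂ (v α) (v β) : ℂ) := inner_re_symm _ _
        simp only [hF, max_eq_right ha0, max_eq_right hb0, min_eq_left ha0,
          min_eq_left hb0, hv0, norm_zero]
        rw [hns, hsym2, hr]
        ring
      · have h := horth α 0 0 β ha0 (le_refl 0) h0b
        rw [hv0, zero_sub, sub_zero, inner_neg_left, neg_eq_zero] at h
        have hr : RCLike.re (inner ℂ (v α) (v β) : ℂ) = 0 := by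
          rw [h]; simp
        have hns := norm_sub_sq (𝕜 := ℂ) (v β) (v α)
        have hsym2 : RCLike.re (inner ℂ (v β) (v α) : ℂ)
            = RCLike.re (inner ℂ (v α) (v β) : ℂ) := inner_re_symm _ _
        simp only [hF, max_eq_right ha0, max_eq_left h0b, min_eq_left ha0,
          min_eq_right h0b, hv0, norm_zero]
        rw [hns, hsym2, hr]
        ring
  have hFcont : Continuous F := by
    apply Continuous.sub
    · exact ((hcont.comp (continuous_id.max continuous_const)).norm).pow 2
    · exact ((hcont.comp (continuous_id.min continuous_const)).norm).pow 2
  refine ⟨F, ⟨?_, ?_, hincr⟩, ?_⟩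
  · intro x y hxy
    have h1 := hincr x y hxy
    have h2 : (0 : ℝ) ≤ ‖v y - v x‖ ^ 2 := by positivity
    linarith
  · intro a
    exact hFcont.continuousWithinAt
  · rintro G ⟨-, -, hGincr⟩
    refine ⟨G 0 - F 0, fun x => ?_⟩
    rcases le_total 0 x with h | h
    · have h1 := hGincr 0 x h
      have h2 := hincr 0 x h
      linarith
    · have h1 := hGincr x 0 h
      have h2 := hincr x 0 h
      linarith
end
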